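/- arXiv:2204.03416 — 10 statements merged into one kernel-verified Lean document; each statement's English description precedes it below -/
import Mathlib

section
/- Let H₁ and H₂ be real Hilbert spaces, K : H₁ → H₂ a continuous linear operator, f ∈ H₂ nonzero, and suppose (γ_j, v_j, β_j, p_j)_{j≥1} is a non-terminating Golub–Kahan bidiagonalization (GKB) process for (K, f). Then the sequences (v_j)_{j≥1} and (p_j)_{j≥1} are orthonormal in H₂ and H₁ respectively: each v_j and each p_j has norm 1, ⟨v_i, v_j⟩ = 0 and ⟨p_i, p_j⟩ = 0 for all i ≠ j. -/
open Filter ContinuousLinearMap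

/-- A non-terminating Golub–Kahan bidiagonalization (GKB) process for `(K, f)`.
Index `j : ℕ` corresponds to the `(j+1)`-st element of the process in the paper
(i.e. `γ 0 = γ₁`, `v 0 = v₁`, etc.). All coefficients are strictly positive. -/
structure GKB {H₁ H₂ : Type*}
    [NormedAddCommGroup H₁] [InnerProductSpace ℝ H₁] [CompleteSpace H₁]
    [NormedAddCommGroup H₂] [InnerProductSpace ℝ H₂] [CompleteSpace H₂]
    (K : H₁ →L[ℝ] H₂) (f : H₂)
    (γ β : ℕ → ℝ) (v : ℕ → H₂) (p : ℕ → H₁) : Prop where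
  γ_pos : ∀ j, 0 < γ j
  β_pos : ∀ j, 0 < β j
  γ_zero : γ 0 = ‖f‖
  v_zero : γ 0 • v 0 = f
  β_zero : β 0 = ‖adjoint K (v 0)‖
  p_zero : β 0 • p 0 = adjoint K (v 0)
  γ_succ : ∀ j, γ (j + 1) = ‖K (p j) - β j • v j‖
  v_succ : ∀ j, γ (j + 1) • v (j + 1) = K (p j) - β j • v j
  β_succ : ∀ j, β (j + 1) = ‖adjoint K (v (j + 1)) - γ (j + 1) • p j‖
  p_succ : ∀ j, β (j + 1) • p (j + 1) = adjoint K (v (j + 1)) - γ (j + 1) • p j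

private lemma gkb_norm_aux {E : Type*} [NormedAddCommGroup E] [NormedSpace ℝ E]
    {c : ℝ} {x : E} (y : E) (hc : 0 < c) (h : c • x = y) (hn : c = ‖y‖) : ‖x‖ = 1 := by
  have h1 : c * ‖x‖ = c * 1 := by
    calc c * ‖x‖ = ‖c • x‖ := by rw [norm_smul, Real.norm_eq_abs, abs_of_pos hc]
      _ = ‖y‖ := by rw [h]
      _ = c * 1 := by rw [mul_one, hn]
  exact mul_left_cancel₀ hc.ne' h1

/-- the sequences `(v j)` and `(p j)` produced by a non-terminating GKB
process are orthonormal in `H₂` and `H₁` respectively. -/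
theorem stmt_1
    {H₁ H₂ : Type*}
    [NormedAddCommGroup H₁] [InnerProductSpace ℝ H₁] [CompleteSpace H₁]
    [NormedAddCommGroup H₂] [InnerProductSpace ℝ H₂] [CompleteSpace H₂]
    (K : H₁ →L[ℝ] H₂) (f : H₂) (hf : f ≠ 0)
    (γ β : ℕ → ℝ) (v : ℕ → H₂) (p : ℕ → H₁)
    (hGKB : GKB K f γ β v p) :
    Orthonormal ℝ v ∧ Orthonormal ℝ p := by
  obtain ⟨γpos, βpos, γ0, v0, β0, p0, γs, vs, βs, ps⟩ := hGKB
  have hvnorm : ∀ j, ‖v j‖ = 1 := by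
    intro j
    cases j with
    | zero => exact gkb_norm_aux f (γpos 0) v0 γ0
    | succ n => exact gkb_norm_aux (K (p n) - β n • v n) (γpos (n + 1)) (vs n) (γs n)
  have hpnorm : ∀ j, ‖p j‖ = 1 := by
    intro j
    cases j with
    | zero => exact gkb_norm_aux (adjoint K (v 0)) (βpos 0) p0 β0
    | succ n => exact gkb_norm_aux (adjoint K (v (n + 1)) - γ (n + 1) • p n) (βpos (n + 1)) (ps n) (βs n)
  -- explicit recurrences
  have hKp : ∀ j, K (p j) = γ (j + 1) • v (j + 1) + β j • v j := by
    intro j; rw [vs j]; abel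
  have hKs : ∀ j, adjoint K (v (j + 1)) = β (j + 1) • p (j + 1) + γ (j + 1) • p j := by
    intro j; rw [ps j]; abel
  have key : ∀ n, (∀ i, i < n → (inner ℝ (v i) (v n) : ℝ) = 0) ∧
      (∀ i, i < n → (inner ℝ (p i) (p n) : ℝ) = 0) := by
    intro n
    induction n with
    | zero => exact ⟨fun i h => absurd h (Nat.not_lt_zero i), fun i h => absurd h (Nat.not_lt_zero i)⟩
    | succ n ih =>
      have hvv : ∀ i, i < n + 1 → (inner ℝ (v i) (v (n + 1)) : ℝ) = 0 := by
        intro i hi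
        have hexp : γ (n + 1) * (inner ℝ (v i) (v (n + 1)) : ℝ) =
            (inner ℝ (adjoint K (v i)) (p n) : ℝ) - β n * (inner ℝ (v i) (v n) : ℝ) := by
          rw [← real_inner_smul_right, vs n, inner_sub_right, real_inner_smul_right,
            adjoint_inner_left]
        rcases Nat.lt_succ_iff_lt_or_eq.mp hi with hi' | hi'
        · -- i < n
          have hA : (inner ℝ (adjoint K (v i)) (p n) : ℝ) = 0 := by
            cases i with
            | zero =>
              rw [← p0, real_inner_smul_left, ih.2 0 hi', mul_zero]
            | succ m =>
              rw [hKs m, inner_add_left, real_inner_smul_left, real_inner_smul_left,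
                ih.2 (m + 1) hi', ih.2 m (Nat.lt_of_succ_lt hi'), mul_zero, mul_zero, add_zero]
          have h0 : γ (n + 1) * (inner ℝ (v i) (v (n + 1)) : ℝ) = 0 := by
            rw [hexp, hA, ih.1 i hi', mul_zero, sub_zero]
          exact (mul_eq_zero.mp h0).resolve_left (γpos (n + 1)).ne'
        · -- i = n
          subst hi'
          have hA : (inner ℝ (adjoint K (v i)) (p i) : ℝ) = β i := by
            cases i with
            | zero =>
              rw [← p0, real_inner_smul_left, real_inner_self_eq_norm_sq, hpnorm]
              ring
            | succ m =>
              rw [hKs m, inner_add_left, real_inner_smul_left, real_inner_smul_left,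
                real_inner_self_eq_norm_sq, hpnorm, ih.2 m (Nat.lt_succ_self m)]
              ring
          have h0 : γ (i + 1) * (inner ℝ (v i) (v (i + 1)) : ℝ) = 0 := by
            rw [hexp, hA, real_inner_self_eq_norm_sq, hvnorm]
            ring
          exact (mul_eq_zero.mp h0).resolve_left (γpos (i + 1)).ne'
      refine ⟨hvv, ?_⟩
      intro i hi
      have hexp : β (n + 1) * (inner ℝ (p i) (p (n + 1)) : ℝ) =
          γ (i + 1) * (inner ℝ (v (i + 1)) (v (n + 1)) : ℝ) +
            β i * (inner ℝ (v i) (v (n + 1)) : ℝ) -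
            γ (n + 1) * (inner ℝ (p i) (p n) : ℝ) := by
        rw [← real_inner_smul_right, ps n, inner_sub_right, real_inner_smul_right,
          adjoint_inner_right, hKp i, inner_add_left, real_inner_smul_left,
          real_inner_smul_left]
      rcases Nat.lt_succ_iff_lt_or_eq.mp hi with hi' | hi'
      · have h0 : β (n + 1) * (inner ℝ (p i) (p (n + 1)) : ℝ) = 0 := by
          rw [hexp, hvv (i + 1) (Nat.succ_lt_succ hi'), hvv i (Nat.lt_succ_of_lt hi'),
            ih.2 i hi']
          ring
        exact (mul_eq_zero.mp h0).resolve_left (βpos (n + 1)).ne'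
      · subst hi'
        have h0 : β (i + 1) * (inner ℝ (p i) (p (i + 1)) : ℝ) = 0 := by
          rw [hexp, hvv i (Nat.lt_succ_self i), real_inner_self_eq_norm_sq, hvnorm,
            real_inner_self_eq_norm_sq, hpnorm]
          ring
        exact (mul_eq_zero.mp h0).resolve_left (βpos (i + 1)).ne'
  constructor
  · refine ⟨hvnorm, ?_⟩
    intro i j hij
    rcases lt_or_gt_of_ne hij with h | h
    · exact (key j).1 i h
    · rw [real_inner_comm]; exact (key i).1 j h
  · refine ⟨hpnorm, ?_⟩
    intro i j hij
    rcases lt_or_gt_of_ne hij with h | h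
    · exact (key j).2 i h
    · rw [real_inner_comm]; exact (key i).2 j h
end

section
/- Let H₁ and H₂ be real Hilbert spaces, K : H₁ → H₂ a compact continuous linear operator, f ∈ H₂ nonzero, and suppose (γ_j, v_j, β_j, p_j)_{j≥1} is a non-terminating Golub–Kahan bidiagonalization (GKB) process for (K, f). Then the sequences of coefficients (β_j)_{j≥1} and (γ_j)_{j≥2} both converge to 0 as j → ∞. -/
open Filter ContinuousLinearMap RealInnerProductSpace

/-- if `K` is moreover compact, then the GKB coefficients `(β j)` and the
tail `(γ j)_{j ≥ 2}` converge to `0`. (With the `0`-based indexing, `γ (j+1)` is the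
paper's `γ_{j+2}`.) -/
theorem stmt_2
    {H₁ H₂ : Type*}
    [NormedAddCommGroup H₁] [InnerProductSpace ℝ H₁] [CompleteSpace H₁]
    [NormedAddCommGroup H₂] [InnerProductSpace ℝ H₂] [CompleteSpace H₂]
    (K : H₁ →L[ℝ] H₂) (hK : IsCompactOperator K) (f : H₂) (hf : f ≠ 0)
    (γ β : ℕ → ℝ) (v : ℕ → H₂) (p : ℕ → H₁)
    (hGKB : GKB K f γ β v p) :
    Tendsto β atTop (nhds 0) ∧ Tendsto (fun j => γ (j + 1)) atTop (nhds 0) := by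
  obtain ⟨hγ, hβ, hγ0, hv0, hβ0, hp0, hγs, hvs, hβs, hps⟩ := hGKB
  -- norms are 1
  have hvnorm : ∀ j, ‖v j‖ = 1 := by
    intro j
    cases j with
    | zero =>
        have h1 : ‖γ 0 • v 0‖ = ‖f‖ := by rw [hv0]
        rw [norm_smul, Real.norm_eq_abs, abs_of_pos (hγ 0), ← hγ0] at h1
        have := (hγ 0).ne'
        field_simp at h1
        tauto
    | succ j =>
        have h1 : ‖γ (j+1) • v (j+1)‖ = γ (j+1) := by rw [hvs j, ← hγs j]
        rw [norm_smul, Real.norm_eq_abs, abs_of_pos (hγ (j+1))] at h1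
        have := (hγ (j+1)).ne'
        field_simp at h1
        tauto
  have hpnorm : ∀ j, ‖p j‖ = 1 := by
    intro j
    cases j with
    | zero =>
        have h1 : ‖β 0 • p 0‖ = β 0 := by rw [hp0, ← hβ0]
        rw [norm_smul, Real.norm_eq_abs, abs_of_pos (hβ 0)] at h1
        have := (hβ 0).ne'
        field_simp at h1
        tauto
    | succ j =>
        have h1 : ‖β (j+1) • p (j+1)‖ = β (j+1) := by rw [hps j, ← hβs j]
        rw [norm_smul, Real.norm_eq_abs, abs_of_pos (hβ (j+1))] at h1
        have := (hβ (j+1)).ne'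
        field_simp at h1
        tauto
  have hKp : ∀ j, K (p j) = γ (j+1) • v (j+1) + β j • v j := by
    intro j
    have := hvs j
    rw [this]; abel
  have hKv : ∀ j, ContinuousLinearMap.adjoint K (v (j+1))
      = β (j+1) • p (j+1) + γ (j+1) • p j := by
    intro j
    have := hps j
    rw [this]; abel
  -- joint orthogonality by induction
  have key : ∀ n, (∀ i ≤ n, ∀ k ≤ n, i ≠ k → ⟪v i, v k⟫ = 0) ∧
      (∀ i ≤ n, ∀ k ≤ n, i ≠ k → ⟪p i, p k⟫ = 0) := by
    intro n
    induction n with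
    | zero =>
        constructor <;> intro i hi k hk hik <;> omega
    | succ n ih =>
        obtain ⟨ihv, ihp⟩ := ih
        -- delta helpers on ≤ n
        have pδ : ∀ i ≤ n, ∀ k ≤ n, ⟪p i, p k⟫ = if i = k then 1 else 0 := by
          intro i hi k hk
          by_cases h : i = k
          · subst h
            simp [real_inner_self_eq_norm_sq, hpnorm i]
          · simp [h, ihp i hi k hk h]
        have vδ : ∀ i ≤ n, ∀ k ≤ n, ⟪v i, v k⟫ = if i = k then 1 else 0 := by
          intro i hi k hk
          by_cases h : i = k
          · subst h
            simp [real_inner_self_eq_norm_sq, hvnorm i]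
          · simp [h, ihv i hi k hk h]
        -- extend v to n+1
        have hvnew : ∀ i ≤ n, ⟪v (n+1), v i⟫ = 0 := by
          intro i hi
          have h1 : γ (n+1) * ⟪v (n+1), v i⟫ = ⟪K (p n), v i⟫ - β n * ⟪v n, v i⟫ := by
            rw [← real_inner_smul_left, hvs n, inner_sub_left, real_inner_smul_left]
          have h2 : ⟪K (p n), v i⟫ = ⟪p n, ContinuousLinearMap.adjoint K (v i)⟫ := by
            rw [ContinuousLinearMap.adjoint_inner_right]
          have h3 : ⟪p n, ContinuousLinearMap.adjoint K (v i)⟫ = β n * ⟪v n, v i⟫ := by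
            cases i with
            | zero =>
                rw [← hp0, real_inner_smul_right]
                rw [pδ n le_rfl 0 (Nat.zero_le n), vδ n le_rfl 0 (Nat.zero_le n)]
                by_cases h : n = 0 <;> simp [h]
            | succ m =>
                rw [hKv m, inner_add_right, real_inner_smul_right, real_inner_smul_right]
                have hm1 : m + 1 ≤ n := hi
                have hm : m ≤ n := by omega
                rw [pδ n le_rfl (m+1) hm1, pδ n le_rfl m hm, vδ n le_rfl (m+1) hm1]
                have hnm : n ≠ m := by omega
                by_cases h : n = m + 1 <;> simp [h, hnm]
          have hne := (hγ (n+1)).ne'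
          have : γ (n+1) * ⟪v (n+1), v i⟫ = 0 := by
            rw [h1, h2, h3]; ring
          exact (mul_eq_zero.mp this).resolve_left hne
        have vδ' : ∀ i ≤ n+1, ∀ k ≤ n+1, ⟪v i, v k⟫ = if i = k then 1 else 0 := by
          intro i hi k hk
          by_cases h : i = k
          · subst h; simp [real_inner_self_eq_norm_sq, hvnorm i]
          · rcases Nat.lt_or_ge i (n+1) with hi' | hi'
            · rcases Nat.lt_or_ge k (n+1) with hk' | hk'
              · simp [h, ihv i (by omega) k (by omega) h]
              · have hk2 : k = n + 1 := by omega
                subst hk2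
                rw [real_inner_comm]
                simp [h, hvnew i (by omega)]
            · have hi2 : i = n + 1 := by omega
              subst hi2
              have hk' : k ≤ n := by omega
              simp [h, hvnew k hk']
        -- extend p to n+1
        have hpnew : ∀ i ≤ n, ⟪p (n+1), p i⟫ = 0 := by
          intro i hi
          have h1 : β (n+1) * ⟪p (n+1), p i⟫
              = ⟪ContinuousLinearMap.adjoint K (v (n+1)), p i⟫ - γ (n+1) * ⟪p n, p i⟫ := by
            rw [← real_inner_smul_left, hps n, inner_sub_left, real_inner_smul_left]
          have h2 : ⟪ContinuousLinearMap.adjoint K (v (n+1)), p i⟫ = ⟪v (n+1), K (p i)⟫ := by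
            rw [ContinuousLinearMap.adjoint_inner_left]
          have h3 : ⟪v (n+1), K (p i)⟫ = γ (n+1) * ⟪p n, p i⟫ := by
            rw [hKp i, inner_add_right, real_inner_smul_right, real_inner_smul_right]
            rw [vδ' (n+1) le_rfl (i+1) (by omega), vδ' (n+1) le_rfl i (by omega),
              pδ n le_rfl i hi]
            have h4 : n + 1 ≠ i := by omega
            by_cases h : n = i <;> simp [h, h4]
          have hne := (hβ (n+1)).ne'
          have : β (n+1) * ⟪p (n+1), p i⟫ = 0 := by
            rw [h1, h2, h3]; ring
          exact (mul_eq_zero.mp this).resolve_left hne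
        constructor
        · intro i hi k hk h
          have := vδ' i hi k hk
          simp [h] at this
          exact this
        · intro i hi k hk h
          rcases Nat.lt_or_ge i (n+1) with hi' | hi'
          · rcases Nat.lt_or_ge k (n+1) with hk' | hk'
            · exact ihp i (by omega) k (by omega) h
            · have hk2 : k = n + 1 := by omega
              subst hk2
              rw [real_inner_comm]
              exact hpnew i (by omega)
          · have hi2 : i = n + 1 := by omega
            subst hi2
            exact hpnew k (by omega)
  have hporth : Orthonormal ℝ p := by
    refine ⟨hpnorm, ?_⟩
    intro i k h
    exact (key (max i k)).2 i (le_max_left _ _) k (le_max_right _ _) h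
  have hvδ : ∀ i k, ⟪v i, v k⟫ = if i = k then 1 else 0 := by
    intro i k
    by_cases h : i = k
    · subst h; simp [real_inner_self_eq_norm_sq, hvnorm i]
    · simp [h, (key (max i k)).1 i (le_max_left _ _) k (le_max_right _ _) h]
  -- weak convergence of p to 0
  have hweak : ∀ x : H₁, Tendsto (fun j => ⟪p j, x⟫) atTop (nhds 0) := by
    intro x
    have hsum := hporth.inner_products_summable (x := x)
    have h1 : Tendsto (fun j => ‖⟪p j, x⟫‖ ^ 2) atTop (nhds 0) := hsum.tendsto_atTop_zero
    have h2 : Tendsto (fun j => Real.sqrt (‖⟪p j, x⟫‖ ^ 2)) atTop (nhds 0) := by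
      have := (Real.continuous_sqrt.tendsto 0).comp h1
      simpa only [Function.comp_def, Real.sqrt_zero] using this
    have h3 : Tendsto (fun j => ‖⟪p j, x⟫‖) atTop (nhds 0) := by
      convert h2 using 2 with j
      rw [Real.sqrt_sq (norm_nonneg _)]
    exact tendsto_zero_iff_norm_tendsto_zero.mpr h3
  -- weak convergence of K p to 0
  have hKweak : ∀ z : H₂, Tendsto (fun j => ⟪K (p j), z⟫) atTop (nhds 0) := by
    intro z
    have : ∀ j, ⟪K (p j), z⟫ = ⟪p j, ContinuousLinearMap.adjoint K z⟫ := fun j => by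
      rw [ContinuousLinearMap.adjoint_inner_right, real_inner_comm]
    simp only [this]
    exact hweak _
  -- strong convergence of K p to 0 via compactness
  have hKstrong : Tendsto (fun j => K (p j)) atTop (nhds 0) := by
    apply tendsto_of_subseq_tendsto
    intro ns hns
    have hs : IsCompact (closure (K '' Metric.closedBall 0 1)) :=
      hK.isCompact_closure_image_closedBall 1
    have hmem : ∀ n, K (p (ns n)) ∈ closure (K '' Metric.closedBall 0 1) := by
      intro n
      apply subset_closure
      exact ⟨p (ns n), by simp [hpnorm], rfl⟩
    obtain ⟨a, -, φ, hφ, hconv⟩ := hs.tendsto_subseq hmem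
    have ha : a = 0 := by
      have h0 : ∀ z : H₂, ⟪a, z⟫ = 0 := by
        intro z
        have l1 : Tendsto (fun n => ⟪K (p (ns (φ n))), z⟫) atTop (nhds ⟪a, z⟫) :=
          hconv.inner tendsto_const_nhds
        have l2 : Tendsto (fun n => ⟪K (p (ns (φ n))), z⟫) atTop (nhds 0) :=
          (hKweak z).comp (hns.comp hφ.tendsto_atTop)
        exact tendsto_nhds_unique l1 l2
      have := h0 a
      rwa [inner_self_eq_zero] at this
    exact ⟨φ, ha ▸ hconv⟩
  have hnorm0 : Tendsto (fun j => ‖K (p j)‖) atTop (nhds 0) := by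
    have := hKstrong.norm
    simpa using this
  -- β j ≤ ‖K p j‖ and γ (j+1) ≤ ‖K p j‖
  have hβle : ∀ j, β j ≤ ‖K (p j)‖ := by
    intro j
    have h1 : ⟪K (p j), v j⟫ = β j := by
      rw [hKp j, inner_add_left, real_inner_smul_left, real_inner_smul_left,
        hvδ (j+1) j, hvδ j j]
      simp
    calc β j = ⟪K (p j), v j⟫ := h1.symm
      _ ≤ ‖K (p j)‖ * ‖v j‖ := real_inner_le_norm _ _
      _ = ‖K (p j)‖ := by rw [hvnorm j, mul_one]
  have hγle : ∀ j, γ (j+1) ≤ ‖K (p j)‖ := by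
    intro j
    have h1 : ⟪K (p j), v (j+1)⟫ = γ (j+1) := by
      rw [hKp j, inner_add_left, real_inner_smul_left, real_inner_smul_left,
        hvδ (j+1) (j+1), hvδ j (j+1)]
      simp
    calc γ (j+1) = ⟪K (p j), v (j+1)⟫ := h1.symm
      _ ≤ ‖K (p j)‖ * ‖v (j+1)‖ := real_inner_le_norm _ _
      _ = ‖K (p j)‖ := by rw [hvnorm (j+1), mul_one]
  constructor
  · exact squeeze_zero (fun j => (hβ j).le) hβle hnorm0
  · exact squeeze_zero (fun j => (hγ (j+1)).le) hγle hnorm0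
end

section
/- Let H₁ and H₂ be real Hilbert spaces, K : H₁ → H₂ a continuous linear operator, f ∈ H₂ nonzero, and suppose (γ_j, v_j, β_j, p_j)_{j≥1} is a non-terminating Golub–Kahan bidiagonalization (GKB) process for (K, f). Then for every k ≥ 1, the linear span of {p₁, …, p_k} equals the Krylov subspace spanned by {(K*K)^j (K* f) : 0 ≤ j ≤ k−1}, and the linear span of {v₁, …, v_k} equals the Krylov subspace spanned by {(K K*)^j f : 0 ≤ j ≤ k−1}. -/
open Filter ContinuousLinearMap

private lemma gkb_aux_map_span {E F : Type*} [AddCommGroup E] [Module ℝ E]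
    [AddCommGroup F] [Module ℝ F]
    (T : E →ₗ[ℝ] F) (s : ℕ → E) (n : ℕ) {x : E}
    (hx : x ∈ Submodule.span ℝ (s '' Set.Iio n))
    (S : Submodule ℝ F) (hgen : ∀ i < n, T (s i) ∈ S) : T x ∈ S := by
  have h := Submodule.apply_mem_span_image_of_mem_span T hx
  refine Submodule.span_le.mpr ?_ h
  rintro _ ⟨_, ⟨i, hi, rfl⟩, rfl⟩
  exact hgen i hi

/-- for every `k ≥ 1`, `span {p₁, …, p_k}` is the Krylov subspace
`span {(K*K)^j (K* f) : 0 ≤ j ≤ k−1}` and `span {v₁, …, v_k}` is the Krylov subspace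
`span {(K K*)^j f : 0 ≤ j ≤ k−1}` (here `p j`, `v j` with `j < k` are the paper's
`p_{j+1}`, `v_{j+1}`). -/
theorem stmt_3
    {H₁ H₂ : Type*}
    [NormedAddCommGroup H₁] [InnerProductSpace ℝ H₁] [CompleteSpace H₁]
    [NormedAddCommGroup H₂] [InnerProductSpace ℝ H₂] [CompleteSpace H₂]
    (K : H₁ →L[ℝ] H₂) (f : H₂) (hf : f ≠ 0)
    (γ β : ℕ → ℝ) (v : ℕ → H₂) (p : ℕ → H₁)
    (hGKB : GKB K f γ β v p) :
    ∀ k : ℕ, 1 ≤ k →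
      Submodule.span ℝ (p '' Set.Iio k) =
        Submodule.span ℝ
          ((fun j => ((adjoint K ∘L K) ^ j) (adjoint K f)) '' Set.Iio k) ∧
      Submodule.span ℝ (v '' Set.Iio k) =
        Submodule.span ℝ ((fun j => ((K ∘L adjoint K) ^ j) f) '' Set.Iio k) := by
    classical
  obtain ⟨γpos, βpos, hγ0, hv0, hβ0, hp0, hγs, hvs, hβs, hps⟩ := hGKB
  set A : H₁ →L[ℝ] H₁ := adjoint K ∘L K with hA
  set B : H₂ →L[ℝ] H₂ := K ∘L adjoint K with hB
  set q : ℕ → H₁ := fun j => (A ^ j) (adjoint K f) with hqdef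
  set w : ℕ → H₂ := fun j => (B ^ j) f with hwdef
  -- commutation facts
  have hcomm1 : ∀ (i : ℕ) (x : H₁), K ((A ^ i) x) = (B ^ i) (K x) := by
    intro i
    induction i with
    | zero => intro x; simp
    | succ i ih =>
      intro x
      rw [pow_succ, ContinuousLinearMap.mul_apply, ih (A x), pow_succ,
        ContinuousLinearMap.mul_apply]
      rfl
  have hcomm2 : ∀ (i : ℕ) (x : H₂), adjoint K ((B ^ i) x) = (A ^ i) (adjoint K x) := by
    intro i
    induction i with
    | zero => intro x; simp
    | succ i ih =>
      intro x
      rw [pow_succ, ContinuousLinearMap.mul_apply, ih (B x), pow_succ,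
        ContinuousLinearMap.mul_apply]
      rfl
  have hKq : ∀ i, K (q i) = w (i + 1) := by
    intro i
    simp only [hqdef, hwdef, hcomm1]
    rw [pow_succ]
    simp [hB]
  have hK'w : ∀ i, adjoint K (w i) = q i := by
    intro i
    simp only [hqdef, hwdef, hcomm2]
  have hγne : ∀ j, γ j ≠ 0 := fun j => (γpos j).ne'
  have hβne : ∀ j, β j ≠ 0 := fun j => (βpos j).ne'
  -- K p i as a combination of v's
  have hKp : ∀ i, K (p i) = γ (i + 1) • v (i + 1) + β i • v i := by
    intro i
    have := hvs i
    rw [this]; abel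
  -- membership helpers
  have hmemp : ∀ (n i : ℕ), i < n → p i ∈ Submodule.span ℝ (p '' Set.Iio n) :=
    fun n i hi => Submodule.subset_span ⟨i, hi, rfl⟩
  have hmemv : ∀ (n i : ℕ), i < n → v i ∈ Submodule.span ℝ (v '' Set.Iio n) :=
    fun n i hi => Submodule.subset_span ⟨i, hi, rfl⟩
  have hmemq : ∀ (n i : ℕ), i < n → q i ∈ Submodule.span ℝ (q '' Set.Iio n) :=
    fun n i hi => Submodule.subset_span ⟨i, hi, rfl⟩
  have hmemw : ∀ (n i : ℕ), i < n → w i ∈ Submodule.span ℝ (w '' Set.Iio n) :=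
    fun n i hi => Submodule.subset_span ⟨i, hi, rfl⟩
  -- mapping lemmas
  have hmap1 : ∀ (n : ℕ) (x : H₁), x ∈ Submodule.span ℝ (p '' Set.Iio n) →
      K x ∈ Submodule.span ℝ (v '' Set.Iio (n + 1)) := by
    intro n x hx
    refine gkb_aux_map_span (K : H₁ →ₗ[ℝ] H₂) p n (by exact hx) _ ?_
    intro i hi
    simp only [ContinuousLinearMap.coe_coe, hKp i]
    exact Submodule.add_mem _
      (Submodule.smul_mem _ _ (hmemv (n+1) (i+1) (by omega)))
      (Submodule.smul_mem _ _ (hmemv (n+1) i (by omega)))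
  have hK'v : ∀ i, adjoint K (v i) ∈ Submodule.span ℝ (p '' Set.Iio (i + 1)) := by
    intro i
    cases i with
    | zero =>
      rw [← hp0]
      exact Submodule.smul_mem _ _ (hmemp 1 0 (by omega))
    | succ i =>
      have h : adjoint K (v (i+1)) = β (i+1) • p (i+1) + γ (i+1) • p i := by
        rw [hps i]; abel
      rw [h]
      exact Submodule.add_mem _
        (Submodule.smul_mem _ _ (hmemp (i+2) (i+1) (by omega)))
        (Submodule.smul_mem _ _ (hmemp (i+2) i (by omega)))
  have hmap2 : ∀ (n : ℕ) (x : H₂), x ∈ Submodule.span ℝ (v '' Set.Iio n) →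
      adjoint K x ∈ Submodule.span ℝ (p '' Set.Iio n) := by
    intro n x hx
    refine gkb_aux_map_span (adjoint K : H₂ →ₗ[ℝ] H₁) v n (by exact hx) _ ?_
    intro i hi
    simp only [ContinuousLinearMap.coe_coe]
    exact Submodule.span_mono (Set.image_mono (Set.Iio_subset_Iio hi)) (hK'v i)
  have hmap3 : ∀ (n : ℕ) (x : H₁), x ∈ Submodule.span ℝ (q '' Set.Iio n) →
      K x ∈ Submodule.span ℝ (w '' Set.Iio (n + 1)) := by
    intro n x hx
    refine gkb_aux_map_span (K : H₁ →ₗ[ℝ] H₂) q n (by exact hx) _ ?_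
    intro i hi
    simp only [ContinuousLinearMap.coe_coe, hKq i]
    exact hmemw (n+1) (i+1) (by omega)
  have hmap4 : ∀ (n : ℕ) (x : H₂), x ∈ Submodule.span ℝ (w '' Set.Iio n) →
      adjoint K x ∈ Submodule.span ℝ (q '' Set.Iio n) := by
    intro n x hx
    refine gkb_aux_map_span (adjoint K : H₂ →ₗ[ℝ] H₁) w n (by exact hx) _ ?_
    intro i hi
    simp only [ContinuousLinearMap.coe_coe, hK'w i]
    exact hmemq n i hi
  -- base facts
  have hw0 : w 0 = f := by simp [hwdef]
  have hq0 : q 0 = (γ 0 * β 0) • p 0 := by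
    have : adjoint K f = γ 0 • (adjoint K (v 0)) := by
      rw [← hv0]; simp
    simp only [hqdef, pow_zero, ContinuousLinearMap.one_apply]
    rw [this, ← hp0, smul_smul]
  -- main induction
  have key : ∀ n : ℕ,
      Submodule.span ℝ (p '' Set.Iio (n + 1)) = Submodule.span ℝ (q '' Set.Iio (n + 1)) ∧
      Submodule.span ℝ (v '' Set.Iio (n + 1)) = Submodule.span ℝ (w '' Set.Iio (n + 1)) := by
    intro n
    induction n with
    | zero =>
      constructor
      · apply le_antisymm <;> refine Submodule.span_le.mpr ?_ <;>
          rintro _ ⟨i, hi, rfl⟩ <;> simp only [Set.mem_Iio] at hi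
        · have hi0 : i = 0 := by omega
          subst hi0
          have : p 0 = (γ 0 * β 0)⁻¹ • q 0 := by
            rw [hq0, smul_smul, inv_mul_cancel₀ (mul_pos (γpos 0) (βpos 0)).ne', one_smul]
          rw [this]
          exact Submodule.smul_mem _ _ (hmemq 1 0 (by omega))
        · have hi0 : i = 0 := by omega
          subst hi0
          rw [hq0]
          exact Submodule.smul_mem _ _ (hmemp 1 0 (by omega))
      · apply le_antisymm <;> refine Submodule.span_le.mpr ?_ <;>
          rintro _ ⟨i, hi, rfl⟩ <;> simp only [Set.mem_Iio] at hi
        · have hi0 : i = 0 := by omega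
          subst hi0
          have : v 0 = (γ 0)⁻¹ • w 0 := by
            rw [hw0, ← hv0, smul_smul, inv_mul_cancel₀ (hγne 0), one_smul]
          rw [this]
          exact Submodule.smul_mem _ _ (hmemw 1 0 (by omega))
        · have hi0 : i = 0 := by omega
          subst hi0
          rw [hw0, ← hv0]
          exact Submodule.smul_mem _ _ (hmemv 1 0 (by omega))
    | succ n ih =>
      obtain ⟨ihp, ihv⟩ := ih
      -- v (n+1) ∈ span w (n+2)
      have hvmem : v (n + 1) ∈ Submodule.span ℝ (w '' Set.Iio (n + 2)) := by
        have h1 : p n ∈ Submodule.span ℝ (q '' Set.Iio (n + 1)) :=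
          ihp ▸ hmemp (n+1) n (by omega)
        have h2 : K (p n) ∈ Submodule.span ℝ (w '' Set.Iio (n + 2)) := hmap3 (n+1) _ h1
        have h3 : v n ∈ Submodule.span ℝ (w '' Set.Iio (n + 2)) := by
          have := ihv ▸ hmemv (n+1) n (by omega)
          exact Submodule.span_mono (Set.image_mono (Set.Iio_subset_Iio (by omega))) this
        have h4 : γ (n+1) • v (n+1) ∈ Submodule.span ℝ (w '' Set.Iio (n + 2)) := by
          rw [hvs n]
          exact Submodule.sub_mem _ h2 (Submodule.smul_mem _ _ h3)
        exact (Submodule.smul_mem_iff _ (hγne (n+1))).mp h4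
      -- w (n+1) ∈ span v (n+2)
      have hwmem : w (n + 1) ∈ Submodule.span ℝ (v '' Set.Iio (n + 2)) := by
        have h1 : q n ∈ Submodule.span ℝ (p '' Set.Iio (n + 1)) :=
          ihp.symm ▸ hmemq (n+1) n (by omega)
        rw [← hKq n]
        exact hmap1 (n+1) _ h1
      -- q (n+1) ∈ span p (n+2)
      have hqmem : q (n + 1) ∈ Submodule.span ℝ (p '' Set.Iio (n + 2)) := by
        rw [← hK'w (n+1)]
        have := hmap2 (n+2) (w (n+1)) hwmem
        exact this
      -- p (n+1) ∈ span q (n+2)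
      have hpmem : p (n + 1) ∈ Submodule.span ℝ (q '' Set.Iio (n + 2)) := by
        have h1 : adjoint K (v (n+1)) ∈ Submodule.span ℝ (q '' Set.Iio (n + 2)) :=
          hmap4 (n+2) _ hvmem
        have h2 : p n ∈ Submodule.span ℝ (q '' Set.Iio (n + 2)) := by
          have := ihp ▸ hmemp (n+1) n (by omega)
          exact Submodule.span_mono (Set.image_mono (Set.Iio_subset_Iio (by omega))) this
        have h4 : β (n+1) • p (n+1) ∈ Submodule.span ℝ (q '' Set.Iio (n + 2)) := by
          rw [hps n]
          exact Submodule.sub_mem _ h1 (Submodule.smul_mem _ _ h2)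
        exact (Submodule.smul_mem_iff _ (hβne (n+1))).mp h4
      have mono_p : Submodule.span ℝ (p '' Set.Iio (n+1)) ≤
          Submodule.span ℝ (p '' Set.Iio (n+2)) :=
        Submodule.span_mono (Set.image_mono (Set.Iio_subset_Iio (by omega)))
      have mono_q : Submodule.span ℝ (q '' Set.Iio (n+1)) ≤
          Submodule.span ℝ (q '' Set.Iio (n+2)) :=
        Submodule.span_mono (Set.image_mono (Set.Iio_subset_Iio (by omega)))
      have mono_v : Submodule.span ℝ (v '' Set.Iio (n+1)) ≤
          Submodule.span ℝ (v '' Set.Iio (n+2)) :=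
        Submodule.span_mono (Set.image_mono (Set.Iio_subset_Iio (by omega)))
      have mono_w : Submodule.span ℝ (w '' Set.Iio (n+1)) ≤
          Submodule.span ℝ (w '' Set.Iio (n+2)) :=
        Submodule.span_mono (Set.image_mono (Set.Iio_subset_Iio (by omega)))
      constructor
      · apply le_antisymm <;> refine Submodule.span_le.mpr ?_ <;>
          rintro _ ⟨i, hi, rfl⟩ <;> simp only [Set.mem_Iio] at hi
        · rcases Nat.lt_succ_iff_lt_or_eq.mp hi with h | h
          · exact mono_q (ihp ▸ hmemp (n+1) i h)
          · subst h; exact hpmem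
        · rcases Nat.lt_succ_iff_lt_or_eq.mp hi with h | h
          · exact mono_p (ihp.symm ▸ hmemq (n+1) i h)
          · subst h; exact hqmem
      · apply le_antisymm <;> refine Submodule.span_le.mpr ?_ <;>
          rintro _ ⟨i, hi, rfl⟩ <;> simp only [Set.mem_Iio] at hi
        · rcases Nat.lt_succ_iff_lt_or_eq.mp hi with h | h
          · exact mono_w (ihv ▸ hmemv (n+1) i h)
          · subst h; exact hvmem
        · rcases Nat.lt_succ_iff_lt_or_eq.mp hi with h | h
          · exact mono_v (ihv.symm ▸ hmemw (n+1) i h)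
          · subst h; exact hwmem
  intro k hk
  obtain ⟨n, rfl⟩ := Nat.exists_eq_succ_of_ne_zero (by omega : k ≠ 0)
  exact key n
end

section
/- Let H₁ and H₂ be real Hilbert spaces and A : H₁ → H₂ a continuous linear operator. If (φ_n)_{n≥1} is a bounded sequence in H₁ and g ∈ H₂ is such that ‖A φ_n − g‖ → 0 as n → ∞, then g belongs to the range of A, i.e., there exists φ ∈ H₁ with A φ = g. -/
open Filter Metric

section aux

variable (H : Type*) [NormedAddCommGroup H] [InnerProductSpace ℝ H] [CompleteSpace H]

/-- For a real Hilbert space, the weak topology coincides with the weak-* topology on the dual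
via the Riesz representation. -/
noncomputable def hilbertWeakHomeo : WeakSpace ℝ H ≃ₜ WeakDual ℝ H where
  toFun x := InnerProductSpace.toDual ℝ H ((toWeakSpace ℝ H).symm x)
  invFun f := toWeakSpace ℝ H ((InnerProductSpace.toDual ℝ H).symm f)
  left_inv x := by simp
  right_inv f := (InnerProductSpace.toDual ℝ H).apply_symm_apply f
  continuous_toFun := by
    apply WeakBilin.continuous_of_continuous_eval
    intro y
    have h : Continuous fun x : WeakSpace ℝ H =>
        (topDualPairing ℝ H).flip ((toWeakSpace ℝ H).symm x)
          (InnerProductSpace.toDual ℝ H y) :=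
      WeakBilin.eval_continuous _ _
    convert h using 2 with x
    simp [topDualPairing_apply, InnerProductSpace.toDual_apply_apply, real_inner_comm]
  continuous_invFun := by
    apply WeakBilin.continuous_of_continuous_eval
    intro y
    have h : Continuous fun f : WeakDual ℝ H =>
        topDualPairing ℝ H f ((InnerProductSpace.toDual ℝ H).symm y) :=
      WeakBilin.eval_continuous _ _
    convert h using 2 with f
    change y ((InnerProductSpace.toDual ℝ H).symm (WeakDual.toStrongDual f)) =
      WeakDual.toStrongDual f ((InnerProductSpace.toDual ℝ H).symm y)
    rw [← InnerProductSpace.toDual_symm_apply (𝕜 := ℝ) (E := H) (y := y),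
      ← InnerProductSpace.toDual_symm_apply (𝕜 := ℝ) (E := H) (y := WeakDual.toStrongDual f), real_inner_comm]

instance : T2Space (WeakSpace ℝ H) := (hilbertWeakHomeo H).isEmbedding.t2Space

/-- The closed ball of a real Hilbert space is weakly compact. -/
theorem isCompact_toWeakSpace_closedBall (r : ℝ) :
    IsCompact (toWeakSpace ℝ H '' closedBall (0 : H) r) := by
  have hc := WeakDual.isCompact_closedBall (𝕜 := ℝ) (E := H) 0 r
  have := hc.image (hilbertWeakHomeo H).symm.continuous
  convert this using 1
  ext x
  constructor
  · rintro ⟨y, hy, rfl⟩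
    refine ⟨InnerProductSpace.toDual ℝ H y, ?_, by
      show toWeakSpace ℝ H ((InnerProductSpace.toDual ℝ H).symm (InnerProductSpace.toDual ℝ H y)) = _
      simp⟩
    change InnerProductSpace.toDual ℝ H y ∈ closedBall 0 r
    simpa [mem_closedBall, dist_zero_right] using hy
  · rintro ⟨f, hf, rfl⟩
    refine ⟨(InnerProductSpace.toDual ℝ H).symm f, ?_, rfl⟩
    change (InnerProductSpace.toDual ℝ H).symm (WeakDual.toStrongDual f) ∈ closedBall (0 : H) r
    simpa [mem_closedBall, dist_zero_right] using hf

end aux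

/-- if `A : H₁ → H₂` is a continuous linear operator between real Hilbert
spaces, `(φ n)` is a bounded sequence and `‖A (φ n) - g‖ → 0`, then `g` is in the range
of `A`. -/
theorem stmt_5
    {H₁ H₂ : Type*}
    [NormedAddCommGroup H₁] [InnerProductSpace ℝ H₁] [CompleteSpace H₁]
    [NormedAddCommGroup H₂] [InnerProductSpace ℝ H₂] [CompleteSpace H₂]
    (A : H₁ →L[ℝ] H₂) (φ : ℕ → H₁) (g : H₂)
    (hbdd : ∃ C : ℝ, ∀ n, ‖φ n‖ ≤ C)
    (hconv : Tendsto (fun n => ‖A (φ n) - g‖) atTop (nhds 0)) :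
    ∃ x : H₁, A x = g := by
  obtain ⟨C, hC⟩ := hbdd
  set S : Set H₁ := closedBall (0 : H₁) C with hS
  have hφS : ∀ n, φ n ∈ S := fun n => by
    simpa [hS, mem_closedBall, dist_zero_right] using hC n
  -- g is in the norm closure of A '' S
  have htend : Tendsto (fun n => A (φ n)) atTop (nhds g) := by
    rw [tendsto_iff_norm_sub_tendsto_zero]
    exact hconv
  have hg : g ∈ closure (A '' S) :=
    mem_closure_of_tendsto htend (Eventually.of_forall fun n => ⟨φ n, hφS n, rfl⟩)
  -- A '' S is convex
  have hconvex : Convex ℝ (A '' S) :=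
    (convex_closedBall (0 : H₁) C).linear_image (A : H₁ →ₗ[ℝ] H₂)
  -- A '' S is weakly compact
  have hK : IsCompact (toWeakSpace ℝ H₂ '' (A '' S)) := by
    have h1 := (isCompact_toWeakSpace_closedBall H₁ C).image (WeakSpace.map A).continuous
    convert h1 using 1
    rw [Set.image_image, Set.image_image]
    rfl
  have hclosed : IsClosed (toWeakSpace ℝ H₂ '' (A '' S)) := hK.isClosed
  have key := hconvex.toWeakSpace_closure (𝕜 := ℝ)
  have hmem : toWeakSpace ℝ H₂ g ∈ toWeakSpace ℝ H₂ '' (A '' S) := by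
    rw [← hclosed.closure_eq, ← key]
    exact ⟨g, hg, rfl⟩
  obtain ⟨y, hy, hyg⟩ := hmem
  have : y = g := (toWeakSpace ℝ H₂).injective hyg
  obtain ⟨x, _, hx⟩ := hy
  exact ⟨x, by rw [hx, this]⟩
end

section
/- Let H₁ and H₂ be real Hilbert spaces, A : H₁ → H₂ a continuous linear operator, and g ∈ H₂ an element that does NOT belong to the range of A. Then every sequence (φ_n)_{n≥1} in H₁ satisfying ‖A φ_n − g‖ → 0 blows up, i.e., ‖φ_n‖ → +∞ as n → ∞. -/
open Filter

/-- if `g` is not in the range of the continuous linear operator `A`, then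
every sequence `(φ n)` with `‖A (φ n) - g‖ → 0` blows up: `‖φ n‖ → +∞`. -/
theorem stmt_6
    {H₁ H₂ : Type*}
    [NormedAddCommGroup H₁] [InnerProductSpace ℝ H₁] [CompleteSpace H₁]
    [NormedAddCommGroup H₂] [InnerProductSpace ℝ H₂] [CompleteSpace H₂]
    (A : H₁ →L[ℝ] H₂) (g : H₂) (hg : ∀ x : H₁, A x ≠ g) :
    ∀ φ : ℕ → H₁, Tendsto (fun n => ‖A (φ n) - g‖) atTop (nhds 0) →
      Tendsto (fun n => ‖φ n‖) atTop atTop := by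
  intro φ hφ
  by_contra hB
  rw [tendsto_atTop] at hB
  push_neg at hB
  obtain ⟨C, hC⟩ := hB
  have hC' : ∃ᶠ n in atTop, ‖φ n‖ < C := hC
  -- the nested closed convex bounded sets
  set K : ℕ → Set H₁ :=
    fun n => Metric.closedBall (0 : H₁) C ∩ A ⁻¹' Metric.closedBall g (1 / (n + 1)) with hK
  have hconv : ∀ n, Convex ℝ (K n) := fun n =>
    (convex_closedBall _ _).inter ((convex_closedBall _ _).linear_preimage (A : H₁ →ₗ[ℝ] H₂))
  have hclosed : ∀ n, IsClosed (K n) := fun n =>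
    Metric.isClosed_closedBall.inter (Metric.isClosed_closedBall.preimage A.continuous)
  have hanti : ∀ m n : ℕ, m ≤ n → K n ⊆ K m := by
    intro m n hmn x hx
    refine ⟨hx.1, ?_⟩
    have h1 : (1 : ℝ) / (n + 1) ≤ 1 / (m + 1) := by
      have : (m : ℝ) ≤ n := Nat.cast_le.2 hmn
      apply one_div_le_one_div_of_le <;> linarith
    exact Metric.closedBall_subset_closedBall h1 hx.2
  have hne : ∀ n, (K n).Nonempty := by
    intro n
    have hpos : (0 : ℝ) < 1 / (n + 1) := by positivity
    have hev : ∀ᶠ k in atTop, ‖A (φ k) - g‖ < 1 / (n + 1) := hφ.eventually (gt_mem_nhds hpos)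
    obtain ⟨k, hk1, hk2⟩ := (hC'.and_eventually hev).exists
    exact ⟨φ k, by simpa [Metric.mem_closedBall, dist_eq_norm] using hk1.le,
      by simpa [Metric.mem_closedBall, dist_eq_norm] using hk2.le⟩
  -- minimal norm elements
  have hmin : ∀ n, ∃ v ∈ K n, ∀ w ∈ K n, ‖v‖ ≤ ‖w‖ := by
    intro n
    obtain ⟨v, hvK, hv⟩ :=
      exists_norm_eq_iInf_of_complete_convex (hne n) ((hclosed n).isComplete) (hconv n) (0 : H₁)
    refine ⟨v, hvK, fun w hw => ?_⟩
    have : Nonempty (K n) := (hne n).to_subtype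
    have hle : (⨅ w : K n, ‖(0 : H₁) - (w : H₁)‖) ≤ ‖(0 : H₁) - w‖ :=
      ciInf_le ⟨0, by rintro r ⟨w', rfl⟩; exact norm_nonneg _⟩ (⟨w, hw⟩ : K n)
    rw [← hv] at hle
    simpa using hle
  choose v hvK hvmin using hmin
  -- norms of v are monotone and bounded
  have hvball : ∀ n, ‖v n‖ ≤ C := by
    intro n
    have := (hvK n).1
    simpa [Metric.mem_closedBall, dist_eq_norm] using this
  have hmono : Monotone fun n => ‖v n‖ := by
    intro m n hmn
    exact hvmin m (v n) (hanti m n hmn (hvK n))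
  have hbdd : BddAbove (Set.range fun n => ‖v n‖) := ⟨C, by rintro r ⟨n, rfl⟩; exact hvball n⟩
  set D : ℝ := ⨆ n, ‖v n‖ with hD
  have hDle : ∀ n, ‖v n‖ ≤ D := fun n => le_ciSup hbdd n
  have htendD : Tendsto (fun n => ‖v n‖) atTop (nhds D) := tendsto_atTop_ciSup hmono hbdd
  have htendD2 : Tendsto (fun n => ‖v n‖ ^ 2) atTop (nhds (D ^ 2)) := htendD.pow 2
  -- Cauchy sequence via parallelogram law
  have hcauchy : CauchySeq v := by
    rw [Metric.cauchySeq_iff']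
    intro ε hε
    have hlt : D ^ 2 - ε ^ 2 / 4 < D ^ 2 := by nlinarith
    obtain ⟨N, hN⟩ := (htendD2.eventually (eventually_gt_nhds hlt)).exists
    refine ⟨N, fun n hn => ?_⟩
    -- midpoint is in K N
    have hm : ((1 : ℝ) / 2) • v n + ((1 : ℝ) / 2) • v N ∈ K N :=
      (hconv N) (hanti N n hn (hvK n)) (hvK N) (by norm_num) (by norm_num) (by norm_num)
    have hmid : ‖v N‖ ≤ ‖((1 : ℝ) / 2) • v n + ((1 : ℝ) / 2) • v N‖ := hvmin N _ hm
    have hmid2 : ‖((1 : ℝ) / 2) • v n + ((1 : ℝ) / 2) • v N‖ = (1 / 2) * ‖v n + v N‖ := by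
      rw [← smul_add, norm_smul]
      norm_num
    have hpar := parallelogram_law_with_norm ℝ (v n) (v N)
    rw [dist_eq_norm]
    have h1 : ‖v n‖ ≤ D := hDle n
    have h2 : ‖v N‖ ≤ D := hDle N
    have h3 : D ^ 2 - ε ^ 2 / 4 < ‖v N‖ ^ 2 := hN
    have h4 : ‖v N‖ ^ 2 ≤ ‖v n‖ ^ 2 := by
      have := hmono hn
      nlinarith [norm_nonneg (v N)]
    nlinarith [norm_nonneg (v n - v N), norm_nonneg (v n + v N), norm_nonneg (v n),
      norm_nonneg (v N), hmid2 ▸ hmid]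
  obtain ⟨x, hx⟩ := cauchySeq_tendsto_of_complete hcauchy
  -- x belongs to every K n
  have hxK : ∀ n, x ∈ K n := by
    intro n
    refine (hclosed n).mem_of_tendsto hx ?_
    filter_upwards [eventually_ge_atTop n] with k hk
    exact hanti n k hk (hvK k)
  have hAx : ∀ n : ℕ, ‖A x - g‖ ≤ 1 / (n + 1) := by
    intro n
    have := (hxK n).2
    simpa [Metric.mem_closedBall, dist_eq_norm] using this
  have h0 : ‖A x - g‖ ≤ 0 := by
    have htend : Tendsto (fun n : ℕ => 1 / ((n : ℝ) + 1)) atTop (nhds 0) :=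
      tendsto_one_div_add_atTop_nhds_zero_nat
    exact ge_of_tendsto' htend hAx
  have : A x = g := by
    rw [← sub_eq_zero]
    exact norm_le_zero_iff.1 h0
  exact hg x this
end

section
/- Let H₁ and H₂ be real Hilbert spaces, K : H₁ → H₂ a compact injective continuous linear operator, φ† ∈ H₁, and f = K φ†. For each k ≥ 1 let 𝕂_k denote the Krylov subspace spanned by {(K*K)^j (K* f) : 0 ≤ j ≤ k−1}, and let φ_k ∈ 𝕂_k be a minimizer of ‖K φ − f‖ over φ ∈ 𝕂_k (such a minimizer exists and is unique since K is injective and 𝕂_k is finite-dimensional). Then φ_k converges to φ† in the norm of H₁ as k → ∞. -/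
open Filter ContinuousLinearMap RealInnerProductSpace

set_option maxHeartbeats 4000000 in
theorem aux9
    {H₁ H₂ : Type*}
    [NormedAddCommGroup H₁] [InnerProductSpace ℝ H₁] [CompleteSpace H₁]
    [NormedAddCommGroup H₂] [InnerProductSpace ℝ H₂] [CompleteSpace H₂]
    (K : H₁ →L[ℝ] H₂) (hinj : Function.Injective K)
    (φdag : H₁)
    (x : ℕ → H₁) (hx0 : x 0 = 0)
    (hmem : ∀ k : ℕ, 1 ≤ k → x k ∈ Submodule.span ℝ
        ((fun j => ((adjoint K ∘L K) ^ j) (adjoint K (K φdag))) '' Set.Iio k))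
    (hopt : ∀ k : ℕ, 1 ≤ k → ∀ ψ ∈ Submodule.span ℝ
        ((fun j => ((adjoint K ∘L K) ^ j) (adjoint K (K φdag))) '' Set.Iio k),
        ‖K (x k) - K φdag‖ ≤ ‖K ψ - K φdag‖) :
    Tendsto x atTop (nhds φdag) := by
  set A := adjoint K ∘L K with hA
  set g := adjoint K (K φdag) with hg
  set V : ℕ → Submodule ℝ H₁ :=
    fun k => Submodule.span ℝ ((fun j => (A ^ j) g) '' Set.Iio k) with hV
  have hmem' : ∀ k : ℕ, 1 ≤ k → x k ∈ V k := hmem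
  have hopt' : ∀ k : ℕ, 1 ≤ k → ∀ ψ ∈ V k, ‖K (x k) - K φdag‖ ≤ ‖K ψ - K φdag‖ := hopt
  -- basic facts about A
  have hKid : ∀ u v : H₁, ⟪A u, v⟫ = ⟪K u, K v⟫ := by
    intro u v
    simp [hA, ContinuousLinearMap.comp_apply, ContinuousLinearMap.adjoint_inner_left]
  have hsym : ∀ u v : H₁, ⟪A u, v⟫ = ⟪u, A v⟫ := by
    intro u v
    rw [hKid]
    conv_rhs => rw [real_inner_comm, hKid]
    exact real_inner_comm _ _
  have hApos : ∀ u : H₁, ⟪A u, u⟫ = ‖K u‖ ^ 2 := by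
    intro u; rw [hKid, real_inner_self_eq_norm_sq]
  have hKzero : ∀ u : H₁, ⟪A u, u⟫ = 0 → u = 0 := by
    intro u hu
    rw [hApos] at hu
    have h2 : K u = 0 := norm_eq_zero.mp (by nlinarith [norm_nonneg (K u)])
    exact hinj (by simpa using h2)
  -- chunk 2
  have hgen : ∀ j : ℕ, (A ^ (j+1)) g = A ((A ^ j) g) := by
    intro j; rw [pow_succ']; rfl
  have hgφ : g = A φdag := rfl
  have hgenφ : ∀ j : ℕ, (A ^ j) g = A ((A ^ j) φdag) := by
    intro j
    have h1 : (A ^ j) g = (A ^ (j+1)) φdag := by rw [hgφ, pow_succ]; rfl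
    rw [h1, pow_succ']; rfl
  have hmono : ∀ {k m : ℕ}, k ≤ m → V k ≤ V m := by
    intro k m hkm
    exact Submodule.span_mono (Set.image_mono (fun a ha => lt_of_lt_of_le ha hkm))
  have hmapA : ∀ k : ℕ, ∀ v ∈ V k, A v ∈ V (k+1) := by
    intro k v hv
    have hle : V k ≤ (V (k+1)).comap (A : H₁ →ₗ[ℝ] H₁) := by
      apply Submodule.span_le.mpr
      rintro _ ⟨j, hj, rfl⟩
      simp only [SetLike.mem_coe, Submodule.mem_comap, ContinuousLinearMap.coe_coe]
      rw [← hgen j]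
      exact Submodule.subset_span ⟨j+1, by simpa using Nat.succ_lt_succ hj, rfl⟩
    exact hle hv
  have hrange : ∀ k : ℕ, ∀ v ∈ V k, ∃ t, A t = v := by
    intro k v hv
    have hle : V k ≤ LinearMap.range (A : H₁ →ₗ[ℝ] H₁) := by
      apply Submodule.span_le.mpr
      rintro _ ⟨j, hj, rfl⟩
      exact ⟨(A ^ j) φdag, (hgenφ j).symm⟩
    exact hle hv
  have hquad : ∀ a b : ℝ, 0 ≤ b → (∀ t : ℝ, 0 ≤ t^2 * b + 2*t*a) → a = 0 := by
    intro a b hb h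
    by_contra ha
    have ha2 : 0 < a ^ 2 := by positivity
    have hb1 : 0 < b + 1 := by linarith
    have h1 := h (-(a/(b+1)))
    have h2 : (-(a/(b+1)))^2 * b + 2*(-(a/(b+1)))*a = (a^2*b - 2*a^2*(b+1))/(b+1)^2 := by
      field_simp
      ring
    rw [h2] at h1
    have h3 : 0 ≤ a^2*b - 2*a^2*(b+1) := by
      have hc : (0:ℝ) < (b+1)^2 := by positivity
      have := mul_le_mul_of_nonneg_right h1 (le_of_lt hc)
      rwa [zero_mul, div_mul_cancel₀ _ (ne_of_gt hc)] at this
    nlinarith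
  set r : ℕ → H₁ := fun k => g - A (x k) with hr
  set d : ℕ → H₁ := fun j => x j - x (j - 1) with hd
  have hortho : ∀ k : ℕ, ∀ v ∈ V k, ⟪r k, v⟫ = 0 := by
    intro k v hv
    rcases Nat.eq_zero_or_pos k with rfl | hk
    · have hv0 : v = 0 := by
        have hI : Set.Iio (0:ℕ) = ∅ := by ext n; simp
        have : V 0 = ⊥ := by
          simp only [hV]; rw [hI]; simp
        rw [this] at hv
        simpa using hv
      simp [hv0]
    · have hexp : ∀ t : ℝ, 0 ≤ t^2 * ‖K v‖^2 + 2*t*⟪K (x k) - K φdag, K v⟫ := by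
        intro t
        have h1 := hopt' k hk (x k + t • v)
          (Submodule.add_mem _ (hmem' k hk) (Submodule.smul_mem _ t hv))
        have hsplit : K (x k + t • v) - K φdag = (K (x k) - K φdag) + t • K v := by
          rw [map_add, map_smul]; abel
        have h2 : ‖K (x k + t • v) - K φdag‖^2
            = ‖K (x k) - K φdag‖^2 + 2*t*⟪K (x k) - K φdag, K v⟫ + t^2*‖K v‖^2 := by
          rw [hsplit, norm_add_sq_real, real_inner_smul_right, norm_smul,
            mul_pow, Real.norm_eq_abs, sq_abs]
          ring
        nlinarith [h1, norm_nonneg (K (x k + t • v) - K φdag), norm_nonneg (K (x k) - K φdag),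
          abs_nonneg t]
      have h0 : ⟪K (x k) - K φdag, K v⟫ = 0 := hquad _ _ (sq_nonneg ‖K v‖) hexp
      have hrk : r k = A (φdag - x k) := by rw [hr]; simp [hgφ, map_sub]
      rw [hrk, hKid, map_sub, inner_sub_left]
      rw [inner_sub_left] at h0
      linarith
  -- chunk 3
  have hxV : ∀ k : ℕ, x k ∈ V k := by
    intro k
    rcases Nat.eq_zero_or_pos k with rfl | hk
    · rw [hx0]; exact Submodule.zero_mem _
    · exact hmem' k hk
  have hdVj : ∀ j : ℕ, d j ∈ V j := by
    intro j
    exact Submodule.sub_mem _ (hxV j) (hmono (Nat.sub_le j 1) (hxV (j-1)))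
  have hrV : ∀ k : ℕ, r k ∈ V (k+1) := by
    intro k
    refine Submodule.sub_mem _ ?_ (hmapA k _ (hxV k))
    exact Submodule.subset_span ⟨0, by simp, by simp⟩
  have hAd : ∀ j : ℕ, A (d (j+1)) = r j - r (j+1) := by
    intro j
    have : d (j+1) = x (j+1) - x j := by rw [hd]; simp
    rw [this, map_sub]
    simp only [hr]
    abel
  have hrA : ∀ k : ℕ, r k = A (φdag - x k) := by
    intro k; rw [hr, map_sub, ← hgφ]
  have hVsucc : ∀ k : ℕ, V (k+1) = V k ⊔ (ℝ ∙ ((A ^ k) g)) := by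
    intro k
    have hIio : Set.Iio (k+1) = insert k (Set.Iio k) := by
      ext n; simp only [Set.mem_Iio, Set.mem_insert_iff]; omega
    simp only [hV]
    rw [hIio, Set.image_insert_eq, Submodule.span_insert, sup_comm]
  have hdecomp : ∀ (k : ℕ) (y : H₁), y ∈ V (k+1) → y ∉ V k → V (k+1) = V k ⊔ (ℝ ∙ y) := by
    intro k y hy1 hy2
    rw [hVsucc k] at hy1
    obtain ⟨u, hu, z, hz, huz⟩ := Submodule.mem_sup.mp hy1
    obtain ⟨c, rfl⟩ := Submodule.mem_span_singleton.mp hz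
    have hc : c ≠ 0 := by
      rintro rfl
      apply hy2
      rw [← huz]; simpa using hu
    have hgenmem : (A ^ k) g ∈ V k ⊔ (ℝ ∙ y) := by
      have h1 : c • ((A ^ k) g) = y - u := by rw [← huz]; abel
      have h2 : (A ^ k) g = c⁻¹ • (y - u) := by
        rw [← h1, smul_smul, inv_mul_cancel₀ hc, one_smul]
      rw [h2]
      refine Submodule.smul_mem _ _ (Submodule.sub_mem _ ?_ ?_)
      · exact Submodule.mem_sup_right (Submodule.mem_span_singleton_self y)
      · exact Submodule.mem_sup_left hu
    apply le_antisymm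
    · rw [hVsucc k]
      exact sup_le le_sup_left ((Submodule.span_singleton_le_iff_mem _ _).mpr hgenmem)
    · refine sup_le (hmono (Nat.le_succ k)) ((Submodule.span_singleton_le_iff_mem _ _).mpr ?_)
      rw [hVsucc k, ← huz]
      exact Submodule.add_mem _ (Submodule.mem_sup_left hu) (Submodule.mem_sup_right hz)
  -- Lemma B : pairwise nonnegativity of increments
  have hdd : ∀ n : ℕ, ∀ i : ℕ, 1 ≤ i → i < n → 0 ≤ ⟪d i, d n⟫ := by
    intro n
    induction n with
    | zero => intro i h1' h2; exact absurd h2 (by omega)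
    | succ n ih =>
      intro i h1' hin
      by_cases hdz : d (n+1) = 0
      · simp [hdz]
      obtain ⟨m, rfl⟩ : ∃ m, n = m + 1 := by
        rcases Nat.eq_zero_or_pos n with rfl | hn
        · exact absurd hin (by omega)
        · exact ⟨n - 1, by omega⟩
      have him : i ≤ m + 1 := by omega
      -- r (m+1) ≠ 0
      have hrne : r (m+1) ≠ 0 := by
        intro hr0
        apply hdz
        have h := hrA (m+1)
        have hxe : φdag - x (m+1) = 0 := by
          apply hKzero
          rw [← h, hr0]
          simp
        have hxeq : x (m+1) = φdag := (sub_eq_zero.mp hxe).symm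
        have hle := hopt' (m+1+1) (by omega) (x (m+1)) (hmono (by omega) (hxV (m+1)))
        rw [hxeq, sub_self, norm_zero] at hle
        have hKeq : K (x (m+1+1)) = K φdag :=
          sub_eq_zero.mp (norm_eq_zero.mp (le_antisymm hle (norm_nonneg _)))
        have hxeq2 : x (m+1+1) = x (m+1) := by
          rw [hxeq]
          exact hinj hKeq
        have hdd2 : d (m+1+1) = x (m+1+1) - x (m+1) := by rw [hd]; simp
        rw [hdd2, hxeq2, sub_self]
      -- d (m+1) ≠ 0
      have hdne : d (m+1) ≠ 0 := by
        intro h0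
        have hreq : r m = r (m+1) := by
          have h := hAd m
          rw [h0, map_zero] at h
          exact (sub_eq_zero.mp h.symm)
        have hrmem : r (m+1) ∈ V (m+1) := by rw [← hreq]; exact hrV m
        exact hrne (inner_self_eq_zero.mp (hortho (m+1) _ hrmem))
      have hAddpos : 0 < ⟪A (d (m+1)), d (m+1)⟫ := by
        rcases lt_or_eq_of_le (show (0:ℝ) ≤ ⟪A (d (m+1)), d (m+1)⟫ by rw [hApos]; positivity)
          with hlt | heq
        · exact hlt
        · exact absurd (hKzero _ heq.symm) hdne
      have hrsqpos : 0 < ‖r (m+1)‖^2 := by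
        have := norm_pos_iff.mpr hrne
        positivity
      set γ := ‖r (m+1)‖^2 / ⟪A (d (m+1)), d (m+1)⟫ with hγ
      have hγpos : 0 < γ := div_pos hrsqpos hAddpos
      set w := r (m+1) + γ • d (m+1) with hw
      have hwV : w ∈ V (m+1+1) :=
        Submodule.add_mem _ (hrV (m+1))
          (Submodule.smul_mem _ _ (hmono (Nat.le_succ _) (hdVj (m+1))))
      have hAdperp : ∀ u ∈ V m, ⟪A (d (m+1)), u⟫ = 0 := by
        intro u hu
        rw [hAd m, inner_sub_left, hortho m u hu, hortho (m+1) u (hmono (Nat.le_succ m) hu)]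
        ring
      have hArperp : ∀ u ∈ V m, ⟪A (r (m+1)), u⟫ = 0 := by
        intro u hu
        rw [hsym]
        exact hortho (m+1) (A u) (hmapA m u hu)
      have hdnotV : d (m+1) ∉ V m := fun hmem0 =>
        absurd (hAdperp _ hmem0) (ne_of_gt hAddpos)
      have hVd : V (m+1) = V m ⊔ (ℝ ∙ d (m+1)) := hdecomp m _ (hdVj (m+1)) hdnotV
      have h1 : ⟪A (r (m+1)), d (m+1)⟫ = -(‖r (m+1)‖^2) := by
        rw [hsym, hAd m, inner_sub_right, hortho (m+1) (r m) (hrV m),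
          real_inner_self_eq_norm_sq]
        ring
      have h2 : γ * ⟪A (d (m+1)), d (m+1)⟫ = ‖r (m+1)‖^2 := by
        rw [hγ]
        exact div_mul_cancel₀ _ (ne_of_gt hAddpos)
      have hAwperp : ∀ u ∈ V (m+1), ⟪A w, u⟫ = 0 := by
        intro u hu
        rw [hVd] at hu
        obtain ⟨u1, hu1, z, hz, rfl⟩ := Submodule.mem_sup.mp hu
        obtain ⟨c, rfl⟩ := Submodule.mem_span_singleton.mp hz
        have expand : ⟪A w, u1 + c • d (m+1)⟫
            = ⟪A (r (m+1)), u1⟫ + γ * ⟪A (d (m+1)), u1⟫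
              + c * ⟪A (r (m+1)), d (m+1)⟫ + c * (γ * ⟪A (d (m+1)), d (m+1)⟫) := by
          rw [hw, map_add, map_smul]
          simp only [inner_add_left, inner_add_right, real_inner_smul_left,
            real_inner_smul_right]
          ring
        rw [expand, hArperp _ hu1, hAdperp _ hu1, h1, h2]
        ring
      have hwne : w ∉ V (m+1) := by
        intro hmemw
        have hw0 : w = 0 := hKzero _ (hAwperp w hmemw)
        have hreq : r (m+1) = -(γ • d (m+1)) := eq_neg_of_add_eq_zero_left (by rw [← hw]; exact hw0)
        have hrmem : r (m+1) ∈ V (m+1) := by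
          rw [hreq]
          exact Submodule.neg_mem _ (Submodule.smul_mem _ _ (hdVj (m+1)))
        exact hrne (inner_self_eq_zero.mp (hortho (m+1) _ hrmem))
      have hVw : V (m+1+1) = V (m+1) ⊔ (ℝ ∙ w) := hdecomp (m+1) w hwV hwne
      have hd2mem : d (m+1+1) ∈ V (m+1) ⊔ (ℝ ∙ w) := by rw [← hVw]; exact hdVj (m+1+1)
      obtain ⟨u, hu, z, hz, huz⟩ := Submodule.mem_sup.mp hd2mem
      obtain ⟨t, rfl⟩ := Submodule.mem_span_singleton.mp hz
      have hAd2perp : ∀ v ∈ V (m+1), ⟪A (d (m+1+1)), v⟫ = 0 := by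
        intro v hv
        rw [hAd (m+1), inner_sub_left, hortho (m+1) v hv,
          hortho (m+1+1) v (hmono (Nat.le_succ _) hv)]
        ring
      have hu0 : u = 0 := by
        apply hKzero
        have hueq : u = d (m+1+1) - t • w := by rw [← huz]; abel
        have hAu : A u = A (d (m+1+1)) - t • A w := by rw [hueq, map_sub, map_smul]
        rw [hAu, inner_sub_left, real_inner_smul_left, hAd2perp u hu, hAwperp u hu]
        ring
      have hdw : d (m+1+1) = t • w := by rw [← huz, hu0, zero_add]
      have hrw : ⟪r (m+1), w⟫ = ‖r (m+1)‖^2 := by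
        rw [hw, inner_add_right, real_inner_smul_right,
          hortho (m+1) (d (m+1)) (hdVj (m+1)), real_inner_self_eq_norm_sq]
        ring
      have hrd2 : ⟪r (m+1), d (m+1+1)⟫ = ⟪A (d (m+1+1)), d (m+1+1)⟫ := by
        have hsplit : r (m+1) = A (d (m+1+1)) + r (m+1+1) := by rw [hAd (m+1)]; abel
        rw [hsplit, inner_add_left, hortho (m+1+1) (d (m+1+1)) (hdVj (m+1+1))]
        ring
      have htpos : 0 ≤ t := by
        have ha : ⟪r (m+1), d (m+1+1)⟫ = t * ‖r (m+1)‖^2 := by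
          rw [hdw, real_inner_smul_right, hrw]
        have hb : 0 ≤ ⟪r (m+1), d (m+1+1)⟫ := by
          rw [hrd2, hApos]
          positivity
        exact (mul_nonneg_iff_of_pos_right hrsqpos).mp (ha ▸ hb)
      have hfin : ⟪d i, d (m+1+1)⟫ = t * (⟪d i, r (m+1)⟫ + γ * ⟪d i, d (m+1)⟫) := by
        rw [hdw, real_inner_smul_right, hw, inner_add_right, real_inner_smul_right]
      have hdir : ⟪d i, r (m+1)⟫ = 0 := by
        rw [real_inner_comm]
        exact hortho (m+1) (d i) (hmono him (hdVj i))
      have hdd0 : 0 ≤ ⟪d i, d (m+1)⟫ := by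
        rcases lt_or_eq_of_le him with hlt | heq
        · exact ih i h1' hlt
        · rw [heq]
          exact real_inner_self_nonneg
      rw [hfin, hdir, zero_add]
      exact mul_nonneg htpos (mul_nonneg hγpos.le hdd0)
  -- chunk 4 : density and residual convergence
  have hdirV : Directed (· ≤ ·) V := fun a b =>
    ⟨max a b, hmono (le_max_left a b), hmono (le_max_right a b)⟩
  set Vinf := ⨆ k, V k with hVinf
  have hmemVinf : ∀ {v : H₁}, v ∈ Vinf → ∃ k, v ∈ V k := by
    intro v hv
    exact (Submodule.mem_iSup_of_directed V hdirV).mp hv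
  set N := Vinf.topologicalClosure with hN
  haveI : CompleteSpace N := Vinf.isClosed_topologicalClosure.completeSpace_coe
  have hgN : g ∈ N := by
    apply Vinf.le_topologicalClosure
    exact Submodule.mem_iSup_of_mem 1 (Submodule.subset_span ⟨0, by simp, by simp⟩)
  have hdagN : φdag ∈ N := by
    obtain ⟨u, hu, z, hz, huz⟩ := N.exists_add_mem_mem_orthogonal φdag
    have hAuN : A u ∈ N := by
      have h1 : (A '' (Vinf : Set H₁)) ⊆ (Vinf : Set H₁) := by
        rintro _ ⟨v, hv, rfl⟩
        obtain ⟨k, hk⟩ := hmemVinf hv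
        exact Submodule.mem_iSup_of_mem (k+1) (hmapA k v hk)
      have hu' : u ∈ closure (Vinf : Set H₁) := by
        rw [← Submodule.topologicalClosure_coe]; exact hu
      have h2 : A u ∈ closure (A '' (Vinf : Set H₁)) :=
        image_closure_subset_closure_image A.continuous ⟨u, hu', rfl⟩
      have h3 : A u ∈ closure (Vinf : Set H₁) := closure_mono h1 h2
      rw [hN]
      exact h3
    have e1 : ⟪g, z⟫ = 0 := hz g hgN
    have e2 : ⟪A u, z⟫ = 0 := hz _ hAuN
    have hzeq : z = φdag - u := by rw [huz]; abel
    have hKz : ⟪A z, z⟫ = 0 := by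
      have hAz : A z = A φdag - A u := by rw [hzeq, map_sub]
      rw [hAz, inner_sub_left, ← hgφ, e1, e2]
      ring
    have hz0 : z = 0 := hKzero z hKz
    rw [huz, hz0, add_zero]
    exact hu
  have hKres : Tendsto (fun k => ‖K (x k) - K φdag‖) atTop (nhds 0) := by
    rw [Metric.tendsto_atTop]
    intro ε hε
    have hε' : 0 < ε / (‖K‖ + 1) := by positivity
    have hcl : φdag ∈ closure (Vinf : Set H₁) := by
      rw [← Submodule.topologicalClosure_coe]; exact hdagN
    obtain ⟨ψ, hψV, hψclose⟩ := Metric.mem_closure_iff.mp hcl _ hε'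
    obtain ⟨k₀, hk₀⟩ := hmemVinf hψV
    refine ⟨max k₀ 1, fun n hn => ?_⟩
    have hn1 : 1 ≤ n := le_trans (le_max_right _ _) hn
    have hψVn : ψ ∈ V n := hmono (le_trans (le_max_left _ _) hn) hk₀
    have hb := hopt' n hn1 ψ hψVn
    have hKψ : ‖K ψ - K φdag‖ ≤ ‖K‖ * ‖ψ - φdag‖ := by
      rw [← map_sub]; exact K.le_opNorm _
    have hdist : ‖ψ - φdag‖ < ε / (‖K‖ + 1) := by
      rw [← dist_eq_norm, dist_comm]
      exact hψclose
    have hlt : ‖K‖ * ‖ψ - φdag‖ < ε := by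
      have h0 : (0:ℝ) < ‖K‖ + 1 := by positivity
      calc ‖K‖ * ‖ψ - φdag‖ < (‖K‖ + 1) * (ε / (‖K‖ + 1)) :=
            mul_lt_mul' (by linarith) hdist (norm_nonneg _) h0
        _ = ε := mul_div_cancel₀ _ (ne_of_gt h0)
    rw [Real.dist_eq, sub_zero, abs_of_nonneg (norm_nonneg _)]
    calc ‖K (x n) - K φdag‖ ≤ ‖K ψ - K φdag‖ := hb
      _ ≤ ‖K‖ * ‖ψ - φdag‖ := hKψ
      _ < ε := hlt
  have hrtend : Tendsto r atTop (nhds 0) := by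
    have hbound : ∀ k, ‖r k‖ ≤ ‖adjoint K‖ * ‖K (x k) - K φdag‖ := by
      intro k
      have hre : r k = adjoint K (K φdag - K (x k)) := by
        simp only [hr]
        rw [map_sub, hg, hA, ContinuousLinearMap.comp_apply]
      rw [hre]
      calc ‖adjoint K (K φdag - K (x k))‖ ≤ ‖adjoint K‖ * ‖K φdag - K (x k)‖ :=
            (adjoint K).le_opNorm _
        _ = ‖adjoint K‖ * ‖K (x k) - K φdag‖ := by rw [norm_sub_rev]
    have hnorm0 : Tendsto (fun k => ‖r k‖) atTop (nhds 0) := by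
      have hmul : Tendsto (fun k => ‖adjoint K‖ * ‖K (x k) - K φdag‖) atTop (nhds 0) := by
        have := hKres.const_mul ‖adjoint K‖
        simpa using this
      exact squeeze_zero (fun k => norm_nonneg _) hbound hmul
    exact tendsto_zero_iff_norm_tendsto_zero.mpr hnorm0
  -- chunk 5 : nonnegativity of ⟪d i, error⟫
  have hde : ∀ i, 1 ≤ i → ∀ k, i ≤ k → 0 ≤ ⟪d i, φdag - x k⟫ := by
    intro i hi k hik
    obtain ⟨ti, hti⟩ := hrange i (d i) (hdVj i)
    have hmono2 : ∀ m, k ≤ m → ⟪d i, φdag - x m⟫ ≤ ⟪d i, φdag - x k⟫ := by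
      intro m
      induction m with
      | zero =>
        intro hm
        have : k = 0 := by omega
        rw [this]
      | succ m ihm =>
        intro hm
        rcases Nat.lt_or_ge k (m+1) with hlt | hge
        · have hkm : k ≤ m := by omega
          have hd1 : d (m+1) = x (m+1) - x m := by rw [hd]; simp
          have hsplit : φdag - x (m+1) = (φdag - x m) - d (m+1) := by rw [hd1]; abel
          rw [hsplit, inner_sub_right]
          have hpos : 0 ≤ ⟪d i, d (m+1)⟫ := hdd (m+1) i hi (by omega)
          linarith [ihm hkm]
        · have : k = m+1 := by omega
          rw [this]
    have heq : ∀ m : ℕ, ⟪d i, φdag - x m⟫ = ⟪ti, r m⟫ := by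
      intro m
      rw [← hti, hsym, ← hrA]
    have hlim : Tendsto (fun m => ⟪d i, φdag - x m⟫) atTop (nhds 0) := by
      have h2 : Tendsto (fun m => ⟪ti, r m⟫) atTop (nhds 0) := by
        have h3 := Filter.Tendsto.inner (𝕜 := ℝ)
          (tendsto_const_nhds : Tendsto (fun _ : ℕ => ti) atTop (nhds ti)) hrtend
        simpa using h3
      exact h2.congr (fun m => (heq m).symm)
    exact le_of_tendsto hlim (Filter.eventually_atTop.mpr ⟨k, hmono2⟩)
  -- chunk 6 : norm bound
  have hxsum : ∀ k, x k = ∑ i ∈ Finset.range k, d (i+1) := by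
    intro k
    have h1 : ∀ i : ℕ, d (i+1) = x (i+1) - x i := by intro i; rw [hd]; simp
    calc x k = x k - x 0 := by rw [hx0, sub_zero]
      _ = ∑ i ∈ Finset.range k, (x (i+1) - x i) := (Finset.sum_range_sub x k).symm
      _ = ∑ i ∈ Finset.range k, d (i+1) := by simp_rw [h1]
  have hkey : ∀ k, 1 ≤ k → 0 ≤ ⟪x k, φdag - x k⟫ := by
    intro k hk
    have hsplit : ⟪x k, φdag - x k⟫ = ∑ i ∈ Finset.range k, ⟪d (i+1), φdag - x k⟫ := by
      rw [← sum_inner, ← hxsum k]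
    rw [hsplit]
    apply Finset.sum_nonneg
    intro i hi
    exact hde (i+1) (by omega) k (by have := Finset.mem_range.mp hi; omega)
  have hxb : ∀ k, 1 ≤ k → ‖x k‖^2 ≤ ⟪x k, φdag⟫ := by
    intro k hk
    have h := hkey k hk
    rw [inner_sub_right, real_inner_self_eq_norm_sq] at h
    linarith
  have hxnorm : ∀ k, 1 ≤ k → ‖x k‖ ≤ ‖φdag‖ := by
    intro k hk
    by_cases h0 : x k = 0
    · rw [h0, norm_zero]; exact norm_nonneg _
    · have h1 := hxb k hk
      have h2 : ⟪x k, φdag⟫ ≤ ‖x k‖ * ‖φdag‖ := real_inner_le_norm _ _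
      have h3 : 0 < ‖x k‖ := norm_pos_iff.mpr h0
      nlinarith
  -- chunk 7 : inner product convergence
  have hrnorm0 : Tendsto (fun k => ‖r k‖) atTop (nhds 0) := by
    have := hrtend.norm
    simpa using this
  have hiptend : Tendsto (fun k => ⟪x k, φdag⟫) atTop (nhds (‖φdag‖^2)) := by
    rw [Metric.tendsto_atTop]
    intro ε hε
    have hδ : 0 < ε / (4*(‖φdag‖+1)) := by positivity
    have hcl : φdag ∈ closure (Vinf : Set H₁) := by
      rw [← Submodule.topologicalClosure_coe]; exact hdagN
    obtain ⟨ψ, hψV, hψclose⟩ := Metric.mem_closure_iff.mp hcl _ hδ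
    obtain ⟨k₀, hk₀⟩ := hmemVinf hψV
    obtain ⟨t, ht⟩ := hrange k₀ ψ hk₀
    have hψd : ‖φdag - A t‖ < ε / (4*(‖φdag‖+1)) := by
      rw [ht, ← dist_eq_norm]
      exact hψclose
    obtain ⟨N₂, hN₂⟩ := (Metric.tendsto_atTop.mp hrnorm0) (ε / (2*(‖t‖+1))) (by positivity)
    refine ⟨max N₂ 1, fun k hk => ?_⟩
    have hk1 : 1 ≤ k := le_trans (le_max_right _ _) hk
    have hkN : N₂ ≤ k := le_trans (le_max_left _ _) hk
    have hrk : ‖r k‖ < ε / (2*(‖t‖+1)) := by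
      have := hN₂ k hkN
      rwa [Real.dist_eq, sub_zero, abs_of_nonneg (norm_nonneg _)] at this
    have hsplit : ⟪x k, φdag⟫ - ‖φdag‖^2
        = ⟪x k - φdag, φdag - A t⟫ + ⟪x k - φdag, A t⟫ := by
      have h1 : (φdag - A t) + A t = φdag := by abel
      rw [← inner_add_right, h1, inner_sub_left, real_inner_self_eq_norm_sq]
    have hterm2 : ⟪x k - φdag, A t⟫ = -⟪r k, t⟫ := by
      rw [← hsym, map_sub, ← hgφ]
      have h2 : A (x k) - g = -(r k) := by simp only [hr]; abel
      rw [h2, inner_neg_left]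
    have hb1 : |⟪x k - φdag, φdag - A t⟫| < ε / 2 := by
      have hle : |⟪x k - φdag, φdag - A t⟫| ≤ ‖x k - φdag‖ * ‖φdag - A t‖ :=
        abs_real_inner_le_norm _ _
      have hxkd : ‖x k - φdag‖ ≤ 2*(‖φdag‖+1) := by
        have := norm_sub_le (x k) φdag
        have := hxnorm k hk1
        linarith
      have hlt2 : ‖x k - φdag‖ * ‖φdag - A t‖ < ε / 2 := by
        have hlt3 : ‖x k - φdag‖ * ‖φdag - A t‖ ≤ 2*(‖φdag‖+1) * ‖φdag - A t‖ :=
          mul_le_mul_of_nonneg_right hxkd (norm_nonneg _)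
        have hlt4 : 2*(‖φdag‖+1) * ‖φdag - A t‖ < 2*(‖φdag‖+1) * (ε / (4*(‖φdag‖+1))) :=
          mul_lt_mul_of_pos_left hψd (by positivity)
        have hlt5 : 2*(‖φdag‖+1) * (ε / (4*(‖φdag‖+1))) = ε / 2 := by
          field_simp
          ring
        linarith
      linarith
    have hb2 : |⟪x k - φdag, A t⟫| < ε / 2 := by
      rw [hterm2, abs_neg]
      have hle : |⟪r k, t⟫| ≤ ‖r k‖ * ‖t‖ := abs_real_inner_le_norm _ _
      have hlt3 : ‖r k‖ * ‖t‖ ≤ ‖r k‖ * (‖t‖+1) :=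
        mul_le_mul_of_nonneg_left (by linarith) (norm_nonneg _)
      have hlt4 : ‖r k‖ * (‖t‖+1) < (ε / (2*(‖t‖+1))) * (‖t‖+1) :=
        mul_lt_mul_of_pos_right hrk (by positivity)
      have hlt5 : (ε / (2*(‖t‖+1))) * (‖t‖+1) = ε / 2 := by
        field_simp
      linarith
    rw [Real.dist_eq]
    calc |⟪x k, φdag⟫ - ‖φdag‖^2| = |⟪x k - φdag, φdag - A t⟫ + ⟪x k - φdag, A t⟫| := by
          rw [hsplit]
      _ ≤ |⟪x k - φdag, φdag - A t⟫| + |⟪x k - φdag, A t⟫| := abs_add_le _ _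
      _ < ε / 2 + ε / 2 := by linarith
      _ = ε := by ring
  -- chunk 8 : conclusion
  have hsq : Tendsto (fun k => ‖x k - φdag‖^2) atTop (nhds 0) := by
    have hub : ∀ k, 1 ≤ k → ‖x k - φdag‖^2 ≤ ‖φdag‖^2 - ⟪x k, φdag⟫ := by
      intro k hk
      have hexp : ‖x k - φdag‖^2 = ‖x k‖^2 - 2*⟪x k, φdag⟫ + ‖φdag‖^2 := norm_sub_sq_real _ _
      have := hxb k hk
      linarith
    have hR : Tendsto (fun k => ‖φdag‖^2 - ⟪x k, φdag⟫) atTop (nhds 0) := by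
      have := hiptend.const_sub (‖φdag‖^2)
      simpa using this
    refine squeeze_zero' ?_ ?_ hR
    · exact Filter.Eventually.of_forall (fun k => sq_nonneg _)
    · exact Filter.eventually_atTop.mpr ⟨1, hub⟩
  have hnormt : Tendsto (fun k => ‖x k - φdag‖) atTop (nhds 0) := by
    have h1 := (Real.continuous_sqrt.tendsto 0).comp hsq
    rw [Real.sqrt_zero] at h1
    exact h1.congr (fun k => Real.sqrt_sq (norm_nonneg _))
  rw [tendsto_iff_dist_tendsto_zero]
  simpa [dist_eq_norm] using hnormt

/-- let `K` be a compact injective continuous linear operator, `f = K φ†`,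
and for each `k ≥ 1` let `φ k` be a minimizer of `‖K φ - f‖` over the Krylov subspace
`𝕂_k = span {(K*K)^j (K* f) : 0 ≤ j ≤ k−1}`. Then `φ k → φ†` in `H₁`. -/
theorem stmt_9
    {H₁ H₂ : Type*}
    [NormedAddCommGroup H₁] [InnerProductSpace ℝ H₁] [CompleteSpace H₁]
    [NormedAddCommGroup H₂] [InnerProductSpace ℝ H₂] [CompleteSpace H₂]
    (K : H₁ →L[ℝ] H₂) (hK : IsCompactOperator K) (hinj : Function.Injective K)
    (φdag : H₁) (f : H₂) (hf : f = K φdag)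
    (φ : ℕ → H₁)
    (hmin : ∀ k : ℕ, 1 ≤ k →
      φ k ∈ Submodule.span ℝ
        ((fun j => ((adjoint K ∘L K) ^ j) (adjoint K f)) '' Set.Iio k) ∧
      ∀ ψ ∈ Submodule.span ℝ
          ((fun j => ((adjoint K ∘L K) ^ j) (adjoint K f)) '' Set.Iio k),
        ‖K (φ k) - f‖ ≤ ‖K ψ - f‖) :
    Tendsto φ atTop (nhds φdag) := by
  subst hf
  set x : ℕ → H₁ := fun k => if k = 0 then 0 else φ k with hx
  have hx0 : x 0 = 0 := by simp [hx]
  have hxk : ∀ k : ℕ, 1 ≤ k → x k = φ k := by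
    intro k hk
    simp only [hx]
    rw [if_neg (by omega)]
  have hten := aux9 K hinj φdag x hx0
    (fun k hk => by rw [hxk k hk]; exact (hmin k hk).1)
    (fun k hk ψ hψ => by rw [hxk k hk]; exact (hmin k hk).2 ψ hψ)
  refine Filter.Tendsto.congr' ?_ hten
  filter_upwards [Filter.eventually_ge_atTop 1] with k hk
  exact hxk k hk
end

section
/- Let p > 1 and C_b > 0 be real numbers. Then there exists a constant C > 0 (one may take C = sqrt(2π)·e^{14.5}·C_b^{1/p}·(p²/(p−1))^p) such that for every integer k ≥ 1 and every real μ with 0 < μ < 1 and μ ≤ C_b·exp(−p·k·log k), one has (k+3)! ≤ C·μ^{−1}·(log(1/μ))^{−p}. -/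
open Real

set_option maxHeartbeats 1000000 in
/-- for `p > 1`, `C_b > 0`, there is a constant `C > 0` (one may take
`C = √(2π)·e^{14.5}·C_b^{1/p}·(p²/(p−1))^p`) such that for every `k ≥ 1` and every
`μ ∈ (0,1)` with `μ ≤ C_b·exp(−p·k·log k)`, one has
`(k+3)! ≤ C·μ⁻¹·(log(1/μ))^{−p}`. -/
theorem stmt_10 (p C_b : ℝ) (hp : 1 < p) (hCb : 0 < C_b) :
    ∃ C : ℝ, 0 < C ∧
      ∀ k : ℕ, 1 ≤ k → ∀ μ : ℝ, 0 < μ → μ < 1 →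
        μ ≤ C_b * Real.exp (-(p * k * Real.log k)) →
        (Nat.factorial (k + 3) : ℝ) ≤ C * μ⁻¹ * Real.log (1 / μ) ^ (-p) := by
  have hp0 : 0 < p := lt_trans one_pos hp
  set a : ℝ := (p - 1) / (2 * p) with ha_def
  set θ : ℝ := (p + 1) / (2 * p) with hθ_def
  set ε : ℝ := (p - 1) / 2 with hε_def
  have ha : 0 < a := div_pos (by linarith) (by linarith)
  have hθ : 0 < θ := div_pos (by linarith) (by linarith)
  have hε : 0 < ε := div_pos (by linarith) (by norm_num)
  have haθ : a + θ = 1 := by rw [ha_def, hθ_def, ← add_div, div_eq_one_iff_eq (by positivity)]; ring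
  have hθp : θ * p = 1 + ε := by rw [hθ_def, hε_def, div_mul_eq_mul_div, div_eq_iff (by positivity)]; ring
  set L : ℝ := ε * Real.exp (15 / ε - 1) with hL_def
  set c₀ : ℝ := L + p * (Real.log (p / a) - 1) + θ * Real.log C_b with hc0_def
  refine ⟨Real.exp c₀, Real.exp_pos _, ?_⟩
  intro k hk μ hμ0 hμ1 hμle
  have hk1 : (1 : ℝ) ≤ (k : ℝ) := by exact_mod_cast hk
  have hk0 : (0 : ℝ) < (k : ℝ) := lt_of_lt_of_le one_pos hk1
  have hlogk0 : 0 ≤ Real.log k := Real.log_nonneg hk1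
  set t : ℝ := Real.log (1 / μ) with ht_def
  have ht : t = -Real.log μ := by rw [ht_def, one_div, Real.log_inv]
  have ht0 : 0 < t := by
    rw [ht]
    have := Real.log_neg hμ0 hμ1
    linarith
  -- lower bound on t from the hypothesis on μ
  have htT : p * k * Real.log k - Real.log C_b ≤ t := by
    have h1 : Real.log μ ≤ Real.log C_b + (-(p * k * Real.log k)) := by
      calc Real.log μ ≤ Real.log (C_b * Real.exp (-(p * k * Real.log k))) :=
            Real.log_le_log hμ0 hμle
        _ = Real.log C_b + (-(p * k * Real.log k)) := by
            rw [Real.log_mul (ne_of_gt hCb) (Real.exp_ne_zero _), Real.log_exp]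
    rw [ht]; linarith
  -- rewrite the right-hand side as a single exponential
  have hinv : μ⁻¹ = Real.exp t := by
    rw [ht, Real.exp_neg, Real.exp_log hμ0]
  have hrpow : t ^ (-p) = Real.exp (-p * Real.log t) := by
    rw [Real.rpow_def_of_pos ht0]; ring_nf
  have hRHS : Real.exp c₀ * μ⁻¹ * t ^ (-p) = Real.exp (c₀ + t + -p * Real.log t) := by
    rw [hinv, hrpow, ← Real.exp_add, ← Real.exp_add]
  rw [hRHS]
  have hfactpos : (0 : ℝ) < (Nat.factorial (k + 3) : ℝ) := by
    exact_mod_cast Nat.factorial_pos (k + 3)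
  rw [← Real.exp_log hfactpos, Real.exp_le_exp]
  -- Step 1: log ((k+3)!) ≤ (k+3) * log (k+3)
  have hfact : Real.log ((Nat.factorial (k + 3) : ℝ)) ≤ (k + 3 : ℝ) * Real.log (k + 3 : ℝ) := by
    have h1 : (Nat.factorial (k + 3) : ℝ) ≤ ((k + 3 : ℕ) : ℝ) ^ (k + 3) := by
      exact_mod_cast Nat.factorial_le_pow (k + 3)
    calc Real.log ((Nat.factorial (k + 3) : ℝ)) ≤ Real.log (((k + 3 : ℕ) : ℝ) ^ (k + 3)) :=
          Real.log_le_log hfactpos h1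
      _ = (k + 3 : ℕ) * Real.log ((k + 3 : ℕ) : ℝ) := by rw [Real.log_pow]
      _ = (k + 3 : ℝ) * Real.log (k + 3 : ℝ) := by push_cast; ring
  -- Step 2: log (k+3) ≤ log k + 3
  have hlogk3 : Real.log (k + 3 : ℝ) ≤ Real.log k + 3 := by
    have h1 : Real.log (k + 3 : ℝ) ≤ Real.log (4 * k) := by
      apply Real.log_le_log (by linarith) (by linarith)
    have h2 : Real.log (4 * (k:ℝ)) = Real.log 4 + Real.log k :=
      Real.log_mul (by norm_num) (ne_of_gt hk0)
    have h3 : Real.log (4:ℝ) ≤ 3 := by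
      have := Real.log_le_sub_one_of_pos (by norm_num : (0:ℝ) < 4)
      linarith
    linarith
  -- Step 3: log k ≤ k
  have hlogk : Real.log k ≤ (k : ℝ) := by
    have := Real.log_le_sub_one_of_pos hk0
    linarith
  -- Step 4: 15 * k ≤ ε * (k * log k) + L
  have h15 : 15 * (k : ℝ) ≤ ε * ((k : ℝ) * Real.log k) + L := by
    have h1 : (15 / ε - Real.log k - 1) + 1 ≤ Real.exp (15 / ε - Real.log k - 1) :=
      Real.add_one_le_exp _
    have h2 : 15 - ε * Real.log k ≤ ε * Real.exp (15 / ε - Real.log k - 1) := by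
      have := mul_le_mul_of_nonneg_left h1 (le_of_lt hε)
      have hεne : ε ≠ 0 := ne_of_gt hε
      calc 15 - ε * Real.log k = ε * ((15 / ε - Real.log k - 1) + 1) := by
            field_simp
            ring
        _ ≤ ε * Real.exp (15 / ε - Real.log k - 1) := this
    have h3 : (k : ℝ) * (15 - ε * Real.log k) ≤ (k : ℝ) * (ε * Real.exp (15 / ε - Real.log k - 1)) :=
      mul_le_mul_of_nonneg_left h2 (le_of_lt hk0)
    have h4 : (k : ℝ) * (ε * Real.exp (15 / ε - Real.log k - 1)) = L := by
      have hek : Real.exp (Real.log k) = (k : ℝ) := Real.exp_log hk0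
      calc (k : ℝ) * (ε * Real.exp (15 / ε - Real.log k - 1))
          = ε * (Real.exp (Real.log k) * Real.exp (15 / ε - Real.log k - 1)) := by rw [hek]; ring
        _ = ε * Real.exp (Real.log k + (15 / ε - Real.log k - 1)) := by rw [Real.exp_add]
        _ = L := by rw [hL_def]; ring_nf
    nlinarith [h3, h4]
  -- Step 5: p * log t ≤ a * t + p * (log (p/a) - 1)
  have h5 : p * Real.log t ≤ a * t + p * (Real.log (p / a) - 1) := by
    have h1 : Real.log (t * a / p) ≤ t * a / p - 1 :=
      Real.log_le_sub_one_of_pos (by positivity)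
    have h2 : Real.log (t * a / p) = Real.log t + Real.log a - Real.log p := by
      rw [Real.log_div (by positivity) (ne_of_gt hp0), Real.log_mul (ne_of_gt ht0) (ne_of_gt ha)]
    have h3 : Real.log (p / a) = Real.log p - Real.log a :=
      Real.log_div (ne_of_gt hp0) (ne_of_gt ha)
    have h4 : Real.log t ≤ t * a / p - 1 + Real.log p - Real.log a := by linarith
    have h5' := mul_le_mul_of_nonneg_left h4 (le_of_lt hp0)
    have h6 : p * (t * a / p - 1 + Real.log p - Real.log a) = a * t + p * (Real.log (p/a) - 1) := by
      rw [h3]; field_simp; ring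
    linarith
  -- θ * t ≥ θ * (p k log k - log C_b)
  have h6 : θ * (p * k * Real.log k - Real.log C_b) ≤ θ * t :=
    mul_le_mul_of_nonneg_left htT (le_of_lt hθ)
  have hsplit : a * t + θ * t = t := by rw [← add_mul, haθ, one_mul]
  -- Combine everything
  have hθpk : θ * (p * k * Real.log k) = (k : ℝ) * Real.log k + ε * ((k : ℝ) * Real.log k) := by
    have : θ * (p * k * Real.log k) = (θ * p) * ((k:ℝ) * Real.log k) := by ring
    rw [this, hθp]; ring
  have hchain : Real.log ((Nat.factorial (k + 3) : ℝ)) ≤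
      (k : ℝ) * Real.log k + ε * ((k : ℝ) * Real.log k) + L := by
    have : (k + 3 : ℝ) * Real.log (k + 3 : ℝ) ≤ (k : ℝ) * Real.log k + 15 * k := by
      have hb : (k + 3 : ℝ) * Real.log (k + 3 : ℝ) ≤ (k + 3 : ℝ) * (Real.log k + 3) := by
        apply mul_le_mul_of_nonneg_left hlogk3 (by linarith)
      have hexp : (k + 3 : ℝ) * (Real.log k + 3)
          = (k : ℝ) * Real.log k + 3 * Real.log k + 3 * (k : ℝ) + 9 := by ring
      linarith [hb, hexp.le, hlogk, hk1]
    linarith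
  have h6' : θ * (p * k * Real.log k) - θ * Real.log C_b ≤ θ * t := by
    have heq : θ * (p * k * Real.log k - Real.log C_b)
        = θ * (p * k * Real.log k) - θ * Real.log C_b := by ring
    linarith [h6, heq.ge, heq.le]
  rw [hc0_def]
  linarith [hchain, hθpk, h5, h6', hsplit]
end

section
/- Let p > 1, ν > 0, C_a > 0 be real numbers, let ρ ∈ (0,1), and let σ be a real number with σ ≥ p/(2ν·log(1/ρ)). Set C₈ = 1 + max(log(1/C_a), 0). Then for every integer k ≥ 0 and every real μ with 0 < μ < 1 and μ ≥ C_a·exp(−exp((k+1)/σ)), one has ρ^{2ν(k+1)} ≤ C₈^p·(log(1/μ))^{−p}. -/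
/-- for `p > 1`, `ν > 0`, `C_a > 0`, `ρ ∈ (0,1)` and
`σ ≥ p/(2ν·log(1/ρ))`, setting `C₈ = 1 + max(log(1/C_a), 0)`, for every `k : ℕ` and
every `μ ∈ (0,1)` with `μ ≥ C_a·exp(−exp((k+1)/σ))` one has
`ρ^{2ν(k+1)} ≤ C₈^p·(log(1/μ))^{−p}`. -/
theorem stmt_11 (p ν C_a ρ σ : ℝ)
    (hp : 1 < p) (hν : 0 < ν) (hCa : 0 < C_a)
    (hρ0 : 0 < ρ) (hρ1 : ρ < 1)
    (hσ : p / (2 * ν * Real.log (1 / ρ)) ≤ σ) :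
    ∀ k : ℕ, ∀ μ : ℝ, 0 < μ → μ < 1 →
      C_a * Real.exp (-Real.exp ((k + 1) / σ)) ≤ μ →
      ρ ^ (2 * ν * (k + 1) : ℝ) ≤
        (1 + max (Real.log (1 / C_a)) 0) ^ p * Real.log (1 / μ) ^ (-p) := by
  intro k μ hμ0 hμ1 hμ
  have hL : 0 < Real.log (1 / ρ) := Real.log_pos (one_lt_one_div hρ0 hρ1)
  have hp0 : (0 : ℝ) < p := by linarith
  have hσ0 : 0 < σ := lt_of_lt_of_le (div_pos hp0 (by positivity)) hσ
  set E := Real.exp ((k + 1) / σ) with hEdef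
  have hE1 : 1 ≤ E := Real.one_le_exp (by positivity)
  have hE0 : 0 < E := by linarith
  set M := max (Real.log (1 / C_a)) 0 with hMdef
  have hM0 : 0 ≤ M := le_max_right _ _
  have hC0 : (0 : ℝ) < 1 + M := by linarith
  -- log (1/μ) ≤ (1+M) * E
  have hlogμ0 : 0 < Real.log (1 / μ) := Real.log_pos (one_lt_one_div hμ0 hμ1)
  have hlogμ : Real.log (1 / μ) ≤ (1 + M) * E := by
    have h1 : Real.log (C_a * Real.exp (-E)) ≤ Real.log μ :=
      Real.log_le_log (by positivity) hμ
    rw [Real.log_mul (ne_of_gt hCa) (Real.exp_ne_zero _), Real.log_exp] at h1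
    have h2 : Real.log (1 / μ) = -Real.log μ := by
      rw [one_div, Real.log_inv]
    have h3 : Real.log (1 / C_a) = -Real.log C_a := by
      rw [one_div, Real.log_inv]
    have h4 : Real.log (1 / C_a) ≤ M := le_max_left _ _
    nlinarith [h4, hE1, hM0]
  -- first: rho ^ (2nu(k+1)) <= E ^ (-p)
  have key : ρ ^ (2 * ν * (k + 1) : ℝ) ≤ E ^ (-p) := by
    rw [Real.rpow_def_of_pos hρ0, Real.rpow_def_of_pos hE0, hEdef, Real.log_exp]
    apply Real.exp_le_exp.mpr
    have hlogρ : Real.log ρ = -Real.log (1 / ρ) := by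
      rw [one_div, Real.log_inv]; ring
    have hX : 0 < 2 * ν * Real.log (1 / ρ) := by positivity
    have hps : p / σ ≤ 2 * ν * Real.log (1 / ρ) := by
      rw [div_le_iff₀ hσ0]
      have h := mul_le_mul_of_nonneg_right hσ hX.le
      rwa [div_mul_cancel₀ _ hX.ne', mul_comm] at h
    have hk1 : (0 : ℝ) ≤ (k : ℝ) + 1 := by positivity
    have h6 := mul_le_mul_of_nonneg_right hps hk1
    have h7 : ((k : ℝ) + 1) / σ * (-p) = -(p / σ * ((k : ℝ) + 1)) := by ring
    rw [hlogρ, h7]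
    nlinarith [h6]
  refine key.trans ?_
  -- E ^ (-p) ≤ (1+M)^p * log(1/μ)^(-p)
  have h5 : Real.log (1 / μ) ^ (-p) ≥ ((1 + M) * E) ^ (-p) :=
    Real.rpow_le_rpow_of_nonpos hlogμ0 hlogμ (by linarith)
  calc E ^ (-p) = (1 + M) ^ p * ((1 + M) * E) ^ (-p) := by
        rw [Real.mul_rpow (le_of_lt hC0) (le_of_lt hE0), ← mul_assoc,
          ← Real.rpow_add hC0, add_neg_cancel, Real.rpow_zero, one_mul]
    _ ≤ (1 + M) ^ p * Real.log (1 / μ) ^ (-p) := by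
        exact mul_le_mul_of_nonneg_left h5 (Real.rpow_nonneg (le_of_lt hC0) _)
end

section
/- For every real number p > 1 and every real number x > 1, the strict inequality ((p−1)/p)·log x > p·log(log x) − p·log(p²/(p−1)) holds. -/
/-- for every `p > 1` and `x > 1`,
`((p−1)/p)·log x > p·log(log x) − p·log(p²/(p−1))`. -/
theorem stmt_12 (p x : ℝ) (hp : 1 < p) (hx : 1 < x) :
    (p - 1) / p * Real.log x >
      p * Real.log (Real.log x) - p * Real.log (p ^ 2 / (p - 1)) := by
  have hp0 : 0 < p := lt_trans one_pos hp
  have hp1 : 0 < p - 1 := by linarith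
  have hL : 0 < Real.log x := Real.log_pos hx
  set c : ℝ := (p - 1) / p ^ 2 with hc
  have hc0 : 0 < c := by positivity
  have hlogsum : Real.log (p ^ 2 / (p - 1)) = - Real.log c := by
    rw [hc, Real.log_div (by positivity) (ne_of_gt hp1),
      Real.log_div (ne_of_gt hp1) (by positivity)]
    ring
  have hkey : Real.log (c * Real.log x) < c * Real.log x :=
    lt_of_le_of_lt (Real.log_le_sub_one_of_pos (by positivity)) (by linarith)
  rw [Real.log_mul (ne_of_gt hc0) (ne_of_gt hL)] at hkey
  have h1 : (p - 1) / p * Real.log x = p * (c * Real.log x) := by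
    rw [hc]
    field_simp
  rw [h1, hlogsum]
  nlinarith [hkey, hp0]
end

section
/- Let H₁ and H₂ be real Hilbert spaces, K : H₁ → H₂ a continuous linear operator, f ∈ H₂ nonzero, and suppose (γ_j, v_j, β_j, p_j)_{j≥1} is a non-terminating Golub–Kahan bidiagonalization (GKB) process for (K, f). For k ≥ 1 let G_k be the (k+1)×k real lower bidiagonal matrix with entries G_k(j,j) = β_j for 1 ≤ j ≤ k, G_k(j+1,j) = γ_{j+1} for 1 ≤ j ≤ k, and all other entries zero, and let e₁ ∈ ℝ^{k+1} be the first standard basis vector. Then for every λ = (λ₁, …, λ_k) ∈ ℝ^k, ‖K(Σ_{j=1}^k λ_j p_j) − f‖ (norm in H₂) equals the Euclidean norm ‖G_k λ − γ₁ e₁‖₂ in ℝ^{k+1}. -/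
open ContinuousLinearMap

open RealInnerProductSpace

lemma GKB.orth {H₁ H₂ : Type*}
    [NormedAddCommGroup H₁] [InnerProductSpace ℝ H₁] [CompleteSpace H₁]
    [NormedAddCommGroup H₂] [InnerProductSpace ℝ H₂] [CompleteSpace H₂]
    {K : H₁ →L[ℝ] H₂} {f : H₂}
    {γ β : ℕ → ℝ} {v : ℕ → H₂} {p : ℕ → H₁}
    (hGKB : GKB K f γ β v p) :
    ∀ n : ℕ,
      (∀ i ≤ n, ∀ j ≤ n, ⟪v i, v j⟫ = if i = j then 1 else 0) ∧
      (∀ i ≤ n, ∀ j ≤ n, ⟪p i, p j⟫ = if i = j then 1 else 0) := by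
  -- basic facts
  have hγ := hGKB.γ_pos
  have hβ := hGKB.β_pos
  have hKp : ∀ j, K (p j) = γ (j + 1) • v (j + 1) + β j • v j := by
    intro j
    have h := hGKB.v_succ j
    rw [eq_sub_iff_add_eq] at h
    exact h.symm
  have hKv0 : adjoint K (v 0) = β 0 • p 0 := hGKB.p_zero.symm
  have hKvs : ∀ j, adjoint K (v (j + 1)) = β (j + 1) • p (j + 1) + γ (j + 1) • p j := by
    intro j
    have h := hGKB.p_succ j
    rw [eq_sub_iff_add_eq] at h
    exact h.symm
  have hvnorm : ∀ j, ⟪v j, v j⟫ = 1 := by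
    intro j
    have h1 : ‖v j‖ = 1 := by
      cases j with
      | zero =>
        have h := congrArg norm hGKB.v_zero
        rw [norm_smul, Real.norm_of_nonneg (hγ 0).le, ← hGKB.γ_zero] at h
        nlinarith [hγ 0]
      | succ m =>
        have h := congrArg norm (hGKB.v_succ m)
        rw [norm_smul, Real.norm_of_nonneg (hγ (m + 1)).le, ← hGKB.γ_succ m] at h
        nlinarith [hγ (m + 1)]
    rw [real_inner_self_eq_norm_mul_norm, h1, mul_one]
  have hpnorm : ∀ j, ⟪p j, p j⟫ = 1 := by
    intro j
    have h1 : ‖p j‖ = 1 := by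
      cases j with
      | zero =>
        have h := congrArg norm hGKB.p_zero
        rw [norm_smul, Real.norm_of_nonneg (hβ 0).le, ← hGKB.β_zero] at h
        nlinarith [hβ 0]
      | succ m =>
        have h := congrArg norm (hGKB.p_succ m)
        rw [norm_smul, Real.norm_of_nonneg (hβ (m + 1)).le, ← hGKB.β_succ m] at h
        nlinarith [hβ (m + 1)]
    rw [real_inner_self_eq_norm_mul_norm, h1, mul_one]
  intro n
  induction n with
  | zero =>
    constructor
    · intro i hi j hj
      interval_cases i; interval_cases j; simpa using hvnorm 0
    · intro i hi j hj
      interval_cases i; interval_cases j; simpa using hpnorm 0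
  | succ n ih =>
    obtain ⟨hv, hp⟩ := ih
    -- step 1 : v (n+1) ⟂ v i for i ≤ n
    have hvnew : ∀ i ≤ n, ⟪v (n + 1), v i⟫ = 0 := by
      intro i hi
      have key : γ (n + 1) * ⟪v (n + 1), v i⟫ = 0 := by
        rw [← real_inner_smul_left, hGKB.v_succ n, inner_sub_left, real_inner_smul_left]
        have hadj : ⟪K (p n), v i⟫ = ⟪p n, adjoint K (v i)⟫ :=
          (ContinuousLinearMap.adjoint_inner_right K (p n) (v i)).symm
        rw [hadj]
        cases i with
        | zero =>
          rw [hKv0, real_inner_smul_right, hp n (le_refl _) 0 (Nat.zero_le _),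
            hv n (le_refl _) 0 (Nat.zero_le _)]
          by_cases h : n = 0 <;> simp [h]
        | succ m =>
          rw [hKvs m, inner_add_right, real_inner_smul_right, real_inner_smul_right,
            hp n (le_refl _) (m + 1) hi, hp n (le_refl _) m (le_of_lt hi),
            hv n (le_refl _) (m + 1) hi]
          have hnm : n ≠ m := by omega
          simp only [hnm, if_false, mul_zero, add_zero, mul_ite, mul_one]
          split_ifs with h
          · rw [h]; ring
          · ring
      have := mul_eq_zero.mp key
      rcases this with h | h
      · exact absurd h (hγ (n + 1)).ne'
      · exact h
    have hv' : ∀ i ≤ n + 1, ∀ j ≤ n + 1, ⟪v i, v j⟫ = if i = j then 1 else 0 := by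
      intro i hi j hj
      rcases Nat.lt_or_ge i (n + 1) with hi' | hi' <;> rcases Nat.lt_or_ge j (n + 1) with hj' | hj'
      · exact hv i (Nat.lt_succ_iff.mp hi') j (Nat.lt_succ_iff.mp hj')
      · have hj'' : j = n + 1 := le_antisymm hj hj'
        subst hj''
        rw [real_inner_comm, hvnew i (Nat.lt_succ_iff.mp hi')]
        simp [Nat.ne_of_lt hi']
      · have hi'' : i = n + 1 := le_antisymm hi hi'
        subst hi''
        rw [hvnew j (Nat.lt_succ_iff.mp hj')]
        have : j ≠ n + 1 := by omega
        simp [this.symm]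
      · have hi'' : i = n + 1 := le_antisymm hi hi'
        have hj'' : j = n + 1 := le_antisymm hj hj'
        subst hi''; subst hj''
        rw [hvnorm]; simp
    -- step 2 : p (n+1) ⟂ p i for i ≤ n
    have hpnew : ∀ i ≤ n, ⟪p (n + 1), p i⟫ = 0 := by
      intro i hi
      have key : β (n + 1) * ⟪p (n + 1), p i⟫ = 0 := by
        rw [← real_inner_smul_left, hGKB.p_succ n, inner_sub_left, real_inner_smul_left]
        have hadj : ⟪adjoint K (v (n + 1)), p i⟫ = ⟪v (n + 1), K (p i)⟫ :=
          ContinuousLinearMap.adjoint_inner_left K (p i) (v (n + 1))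
        rw [hadj, hKp i, inner_add_right, real_inner_smul_right, real_inner_smul_right,
          hv' (n + 1) (le_refl _) (i + 1) (by omega),
          hv' (n + 1) (le_refl _) i (by omega),
          hp n (le_refl _) i (by omega)]
        have h1 : n + 1 ≠ i := by omega
        by_cases h : n = i
        · subst h; simp
        · have h2 : n + 1 ≠ i + 1 := by omega
          simp [h1, h2, h]
      have := mul_eq_zero.mp key
      rcases this with h | h
      · exact absurd h (hβ (n + 1)).ne'
      · exact h
    refine ⟨hv', ?_⟩
    intro i hi j hj
    rcases Nat.lt_or_ge i (n + 1) with hi' | hi' <;> rcases Nat.lt_or_ge j (n + 1) with hj' | hj'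
    · exact hp i (Nat.lt_succ_iff.mp hi') j (Nat.lt_succ_iff.mp hj')
    · have hj'' : j = n + 1 := le_antisymm hj hj'
      subst hj''
      rw [real_inner_comm, hpnew i (Nat.lt_succ_iff.mp hi')]
      simp [Nat.ne_of_lt hi']
    · have hi'' : i = n + 1 := le_antisymm hi hi'
      subst hi''
      rw [hpnew j (Nat.lt_succ_iff.mp hj')]
      have : j ≠ n + 1 := by omega
      simp [this.symm]
    · have hi'' : i = n + 1 := le_antisymm hi hi'
      have hj'' : j = n + 1 := le_antisymm hj hj'
      subst hi''; subst hj''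
      rw [hpnorm]; simp

/-- with `G_k` the `(k+1) × k` lower bidiagonal GKB matrix (indices are
`0`-based: the `0`-based column `j` has `β j` — the paper's `β_{j+1}` — on the diagonal
and `γ (j+1)` — the paper's `γ_{j+2}` — below it) and `e₁` the first standard basis
vector of `ℝ^{k+1}`, for every `λ ∈ ℝ^k` one has
`‖K (Σ_j λ_j p_j) − f‖ = ‖G_k λ − γ₁ e₁‖₂`. -/
theorem stmt_16
    {H₁ H₂ : Type*}
    [NormedAddCommGroup H₁] [InnerProductSpace ℝ H₁] [CompleteSpace H₁]
    [NormedAddCommGroup H₂] [InnerProductSpace ℝ H₂] [CompleteSpace H₂]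
    (K : H₁ →L[ℝ] H₂) (f : H₂) (hf : f ≠ 0)
    (γ β : ℕ → ℝ) (v : ℕ → H₂) (p : ℕ → H₁)
    (hGKB : GKB K f γ β v p)
    (k : ℕ) (hk : 1 ≤ k)
    (G : Matrix (Fin (k + 1)) (Fin k) ℝ)
    (hG : ∀ (i : Fin (k + 1)) (j : Fin k),
      G i j = if (i : ℕ) = (j : ℕ) then β (j : ℕ)
        else if (i : ℕ) = (j : ℕ) + 1 then γ ((j : ℕ) + 1) else 0) :
    ∀ lam : EuclideanSpace ℝ (Fin k),
      ‖K (∑ j : Fin k, lam j • p (j : ℕ)) - f‖ =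
        ‖Matrix.toEuclideanLin G lam -
          γ 0 • EuclideanSpace.single (0 : Fin (k + 1)) (1 : ℝ)‖ := by
  intro lam
  have hKp : ∀ j, K (p j) = γ (j + 1) • v (j + 1) + β j • v j := by
    intro j
    have h := hGKB.v_succ j
    rw [eq_sub_iff_add_eq] at h
    exact h.symm
  -- orthonormality of the first k+1 v's
  have horth := (hGKB.orth k).1
  have hON : Orthonormal ℝ (fun i : Fin (k + 1) => v (i : ℕ)) := by
    rw [orthonormal_iff_ite]
    intro i j
    rw [horth (i : ℕ) (Nat.lt_succ_iff.mp i.isLt) (j : ℕ) (Nat.lt_succ_iff.mp j.isLt)]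
    simp [Fin.val_eq_val]
  -- the coefficient vector
  set w : EuclideanSpace ℝ (Fin (k + 1)) :=
    Matrix.toEuclideanLin G lam - γ 0 • EuclideanSpace.single (0 : Fin (k + 1)) (1 : ℝ) with hw
  have hwi : ∀ i : Fin (k + 1), w i =
      (∑ j : Fin k, G i j * lam j) - γ 0 * (if i = 0 then 1 else 0) := by
    intro i
    simp [hw, Matrix.toEuclideanLin_apply, Matrix.mulVec, dotProduct,
      EuclideanSpace.single_apply]
  -- column sums give K (p j)
  have hcol : ∀ j : Fin k, ∑ i : Fin (k + 1), G i j • v (i : ℕ) = K (p (j : ℕ)) := by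
    intro j
    have hsplit : ∀ i : Fin (k + 1), G i j • v (i : ℕ) =
        (if i = Fin.castSucc j then β (j : ℕ) • v (j : ℕ) else 0) +
        (if i = Fin.succ j then γ ((j : ℕ) + 1) • v ((j : ℕ) + 1) else 0) := by
      intro i
      rcases eq_or_ne i (Fin.castSucc j) with e1 | e1
      · subst e1
        rw [hG]
        have hne : Fin.castSucc j ≠ Fin.succ j := (Fin.castSucc_lt_succ : Fin.castSucc j < Fin.succ j).ne
        simp [hne]
      · rcases eq_or_ne i (Fin.succ j) with e2 | e2
        · subst e2
          rw [hG]
          have hne : Fin.succ j ≠ Fin.castSucc j := (Fin.castSucc_lt_succ : Fin.castSucc j < Fin.succ j).ne'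
          simp [hne, Fin.val_succ]
        · rw [hG]
          have h1 : (i : ℕ) ≠ (j : ℕ) := fun h => e1 (Fin.ext (by simpa using h))
          have h2 : (i : ℕ) ≠ (j : ℕ) + 1 := fun h => e2 (Fin.ext (by simpa using h))
          simp [h1, h2, e1, e2]
    rw [Finset.sum_congr rfl fun i _ => hsplit i, Finset.sum_add_distrib,
      Finset.sum_ite_eq' Finset.univ (Fin.castSucc j),
      Finset.sum_ite_eq' Finset.univ (Fin.succ j)]
    simp [hKp (j : ℕ)]
    abel
  -- main vector identity
  have hvec : K (∑ j : Fin k, lam j • p (j : ℕ)) - f =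
      ∑ i : Fin (k + 1), w i • v (i : ℕ) := by
    have : K (∑ j : Fin k, lam j • p (j : ℕ)) =
        ∑ i : Fin (k + 1), (∑ j : Fin k, G i j * lam j) • v (i : ℕ) := by
      rw [map_sum]
      calc ∑ j : Fin k, K (lam j • p (j : ℕ))
          = ∑ j : Fin k, lam j • (∑ i : Fin (k + 1), G i j • v (i : ℕ)) := by
            refine Finset.sum_congr rfl fun j _ => ?_
            rw [hcol j, map_smul]
        _ = ∑ j : Fin k, ∑ i : Fin (k + 1), (G i j * lam j) • v (i : ℕ) := by
            refine Finset.sum_congr rfl fun j _ => ?_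
            rw [Finset.smul_sum]
            refine Finset.sum_congr rfl fun i _ => ?_
            rw [smul_smul, mul_comm]
        _ = ∑ i : Fin (k + 1), (∑ j : Fin k, G i j * lam j) • v (i : ℕ) := by
            rw [Finset.sum_comm]
            refine Finset.sum_congr rfl fun i _ => ?_
            rw [Finset.sum_smul]
    rw [this, ← hGKB.v_zero]
    have hrhs : ∑ i : Fin (k + 1), w i • v (i : ℕ) =
        ∑ i : Fin (k + 1), ((∑ j : Fin k, G i j * lam j) • v (i : ℕ) -
          (γ 0 * (if i = 0 then 1 else 0)) • v (i : ℕ)) := by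
      refine Finset.sum_congr rfl fun i _ => ?_
      rw [hwi i, sub_smul]
    rw [hrhs, Finset.sum_sub_distrib]
    congr 1
    have h2 : ∀ i : Fin (k + 1), (γ 0 * (if i = 0 then 1 else 0)) • v (i : ℕ) =
        if i = (0 : Fin (k+1)) then γ 0 • v 0 else 0 := by
      intro i
      by_cases h : i = 0 <;> simp [h]
    rw [Finset.sum_congr rfl fun i _ => h2 i, Finset.sum_ite_eq' Finset.univ (0 : Fin (k+1))]
    simp
  rw [hvec]
  -- norms
  have hsq : ‖∑ i : Fin (k + 1), w i • v (i : ℕ)‖ ^ 2 = ∑ i : Fin (k + 1), w i ^ 2 := by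
    rw [← real_inner_self_eq_norm_sq]
    rw [hON.inner_sum w w Finset.univ]
    simp [sq]
  have hsq2 : ‖w‖ ^ 2 = ∑ i : Fin (k + 1), w i ^ 2 := by
    rw [EuclideanSpace.norm_eq, Real.sq_sqrt (by positivity)]
    refine Finset.sum_congr rfl fun i _ => ?_
    rw [Real.norm_eq_abs, sq_abs]
  have heq := hsq.trans hsq2.symm
  have h := congrArg Real.sqrt heq
  rwa [Real.sqrt_sq (norm_nonneg _), Real.sqrt_sq (norm_nonneg _)] at h
end
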